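/- Under the stated assumptions, let u ∈ L²_V and g ∈ L²_{V*}. Then ∂•u exists in L²_{V*} and L(t)∂•u(t) = g(t) for a.e. t if and only if for every v₀ ∈ V₀ the identity (d/dt)(L(t)u(t), φ_t v₀)_{H(t)} = ⟨g(t) + M(t)u(t), φ_t v₀⟩_{V(t)*,V(t)} holds in the weak (distributional) sense on (0,T). -/

import Mathlib

open MeasureTheory Set Filter Topology

noncomputable section

/-- A compatible pair `(X, (φ_t))` in the sense of Alphonse–Elliott–Stinner:
for each `t`, `X t` is a real (separable, complete: imposed as instance assumptions
where needed) inner product space, `φ t : X 0 ≃L[ℝ] X t` with `φ 0 = id`,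
uniformly bounded together with its inverse on `[0,T]`, and `t ↦ ‖φ t u‖` continuous. -/
structure CompatiblePair (T : ℝ) (X : ℝ → Type*) [∀ t, NormedAddCommGroup (X t)]
    [∀ t, InnerProductSpace ℝ (X t)] where
  φ : ∀ t : ℝ, X 0 ≃L[ℝ] X t
  φ_zero : φ 0 = ContinuousLinearEquiv.refl ℝ (X 0)
  C : ℝ
  C_pos : 0 < C
  norm_map_le : ∀ t ∈ Icc (0:ℝ) T, ∀ u : X 0, ‖φ t u‖ ≤ C * ‖u‖
  norm_symm_le : ∀ t ∈ Icc (0:ℝ) T, ∀ v : X t, ‖(φ t).symm v‖ ≤ C * ‖v‖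
  continuous_norm : ∀ u : X 0, ContinuousOn (fun t => ‖φ t u‖) (Icc (0:ℝ) T)

variable {T : ℝ} {X : ℝ → Type*} [∀ t, NormedAddCommGroup (X t)]
  [∀ t, InnerProductSpace ℝ (X t)]

/-- Membership in `L²_X`: the pullback `t ↦ φ_{-t} u(t)` lies in `L²(0,T;X₀)`. -/
def CompatiblePair.MemL2X (P : CompatiblePair T X) (u : ∀ t, X t) : Prop :=
  MemLp (fun t => (P.φ t).symm (u t)) 2 (volume.restrict (Ioc (0:ℝ) T))

/-- The dual operator `φ_t^* : X(t)* → X₀*`. -/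
def CompatiblePair.pullDual (P : CompatiblePair T X) (t : ℝ) (f : StrongDual ℝ (X t)) :
    StrongDual ℝ (X 0) :=
  f.comp (P.φ t : X 0 →L[ℝ] X t)

/-- The inverse dual operator `φ_{-t}^* : X₀* → X(t)*`. -/
def CompatiblePair.pushDual (P : CompatiblePair T X) (t : ℝ) (f : StrongDual ℝ (X 0)) :
    StrongDual ℝ (X t) :=
  f.comp ((P.φ t).symm : X t →L[ℝ] X 0)

/-- Membership in `L²_{X*}`: the pullback `t ↦ φ_t^* f(t)` lies in `L²(0,T;X₀*)`. -/
def CompatiblePair.MemL2Xstar (P : CompatiblePair T X) (f : ∀ t, StrongDual ℝ (X t)) :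
    Prop :=
  MemLp (fun t => P.pullDual t (f t)) 2 (volume.restrict (Ioc (0:ℝ) T))

/-- The inner product on the dual of a real Hilbert space, via the Riesz isometry. -/
def dualInner {E : Type*} [NormedAddCommGroup E] [InnerProductSpace ℝ E] [CompleteSpace E]
    (f g : StrongDual ℝ E) : ℝ :=
  inner ℝ ((InnerProductSpace.toDual ℝ E).symm f) ((InnerProductSpace.toDual ℝ E).symm g)
/-- The `L²(0,T)`-type norm of a (possibly `t`-dependent) family of vectors. -/
def l2n (T : ℝ) {Y : ℝ → Type*} [∀ t, NormedAddCommGroup (Y t)] (u : ∀ t, Y t) : ℝ :=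
  Real.sqrt (∫ t in Ioc (0:ℝ) T, ‖u t‖ ^ 2)

/-- The `W`-type norm built from a function and its (weak material) derivative. -/
def wn (T : ℝ) {Y Z : ℝ → Type*} [∀ t, NormedAddCommGroup (Y t)]
    [∀ t, NormedAddCommGroup (Z t)] (u : ∀ t, Y t) (g : ∀ t, Z t) : ℝ :=
  Real.sqrt ((∫ t in Ioc (0:ℝ) T, ‖u t‖ ^ 2) + ∫ t in Ioc (0:ℝ) T, ‖g t‖ ^ 2)

/-- The evolving Gelfand-triple setting: compatible pairs `(V, φ|_{V₀})` and `(H, φ)`,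
with `V(t) ⊂ H(t)` continuously and densely (via `ι t`), together with the
differentiability assumptions on `t ↦ ‖φ_t u₀‖²_{H(t)}` (Assumptions 2.21/2.31 of the paper). -/
structure EvolvingGelfand (T : ℝ) (V H : ℝ → Type*)
    [∀ t, NormedAddCommGroup (V t)] [∀ t, InnerProductSpace ℝ (V t)]
    [∀ t, NormedAddCommGroup (H t)] [∀ t, InnerProductSpace ℝ (H t)] where
  PV : CompatiblePair T V
  PH : CompatiblePair T H
  ι : ∀ t, V t →L[ℝ] H t
  ι_inj : ∀ t, Function.Injective (ι t)
  ι_dense : ∀ t, DenseRange (ι t)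
  ι_compat : ∀ (t : ℝ) (v : V 0), ι t (PV.φ t v) = PH.φ t (ι 0 v)
  θ : ℝ → H 0 → ℝ
  θ_hasDeriv : ∀ u₀ : H 0, ∀ t ∈ Icc (0:ℝ) T,
    HasDerivWithinAt (fun s => ‖PH.φ s u₀‖ ^ 2) (θ t u₀) (Icc (0:ℝ) T) t
  θ_cont : ∀ t ∈ Icc (0:ℝ) T, Continuous (θ t)
  Cθ : ℝ
  θ_bound : ∀ t ∈ Icc (0:ℝ) T, ∀ u₀ v₀ : H 0,
    |θ t (u₀ + v₀) - θ t (u₀ - v₀)| ≤ Cθ * ‖u₀‖ * ‖v₀‖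

namespace EvolvingGelfand

variable {T : ℝ} {V H : ℝ → Type*}
  [∀ t, NormedAddCommGroup (V t)] [∀ t, InnerProductSpace ℝ (V t)]
  [∀ t, NormedAddCommGroup (H t)] [∀ t, InnerProductSpace ℝ (H t)]

/-- The bilinear form `λ̂(t;·,·)` on `H₀`. -/
def lamHat (E : EvolvingGelfand T V H) (t : ℝ) (u₀ v₀ : H 0) : ℝ :=
  (E.θ t (u₀ + v₀) - E.θ t (u₀ - v₀)) / 4

/-- The bilinear form `λ(t;·,·)` on `H(t)`. -/
def lam (E : EvolvingGelfand T V H) (t : ℝ) (u v : H t) : ℝ :=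
  E.lamHat t ((E.PH.φ t).symm u) ((E.PH.φ t).symm v)

/-- The embedding `H(t) ⊂ V(t)*` of the Gelfand triple: `h ↦ (h, ι t ·)_{H(t)}`. -/
def embed (E : EvolvingGelfand T V H) (t : ℝ) (h : H t) : StrongDual ℝ (V t) :=
  (innerSL ℝ h).comp (E.ι t)

/-- `g ∈ L²_{V*}` is the weak material derivative of `u ∈ L²_V`. Test functions
`η ∈ D_V(0,T)` are parametrised by their pullbacks `η₀ ∈ C_c^∞((0,T);V₀)`,
so that `η(t) = φ_t η₀(t)` and `∂•η(t) = φ_t η₀'(t)`. -/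
def IWMD (E : EvolvingGelfand T V H) (u : ∀ t, V t)
    (g : ∀ t, StrongDual ℝ (V t)) : Prop :=
  ∀ η₀ : ℝ → V 0, ContDiff ℝ (⊤ : ℕ∞) η₀ → tsupport η₀ ⊆ Ioo (0:ℝ) T →
    (∫ t in Ioc (0:ℝ) T, g t (E.PV.φ t (η₀ t)))
      = -(∫ t in Ioc (0:ℝ) T,
            (inner ℝ (E.ι t (u t)) (E.ι t (E.PV.φ t (deriv η₀ t))) : ℝ))
        - ∫ t in Ioc (0:ℝ) T, E.lam t (E.ι t (u t)) (E.ι t (E.PV.φ t (η₀ t)))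

/-- `v' ∈ L²(0,T;V₀*)` is the weak derivative of `v ∈ L²(0,T;V₀)` in the
Gelfand triple `V₀ ⊂ H₀ ⊂ V₀*`. -/
def HWD0 (E : EvolvingGelfand T V H) (v : ℝ → V 0)
    (v' : ℝ → StrongDual ℝ (V 0)) : Prop :=
  ∀ ζ : ℝ → ℝ, ContDiff ℝ (⊤ : ℕ∞) ζ → tsupport ζ ⊆ Ioo (0:ℝ) T → ∀ w : V 0,
    (∫ t in Ioc (0:ℝ) T, deriv ζ t * (inner ℝ (E.ι 0 (v t)) (E.ι 0 w) : ℝ))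
      = -∫ t in Ioc (0:ℝ) T, ζ t * v' t w

/-- The evolving space equivalence between `W(V,V*)` and `𝒲(V₀,V₀*)`,
including the two-sided norm equivalence. -/
def ESE (E : EvolvingGelfand T V H) : Prop :=
  (∀ u : ∀ t, V t, E.PV.MemL2X u →
    ((∃ g, E.PV.MemL2Xstar g ∧ E.IWMD u g) ↔
      (∃ v', MemLp v' 2 (volume.restrict (Ioc (0:ℝ) T)) ∧
        E.HWD0 (fun t => (E.PV.φ t).symm (u t)) v'))) ∧
  ∃ C₁ C₂ : ℝ, 0 < C₁ ∧ 0 < C₂ ∧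
    ∀ (u : ∀ t, V t) (g : ∀ t, StrongDual ℝ (V t))
      (v' : ℝ → StrongDual ℝ (V 0)),
      E.PV.MemL2X u → E.PV.MemL2Xstar g → E.IWMD u g →
      MemLp v' 2 (volume.restrict (Ioc (0:ℝ) T)) →
      E.HWD0 (fun t => (E.PV.φ t).symm (u t)) v' →
        C₁ * wn T (fun t => (E.PV.φ t).symm (u t)) v' ≤ wn T u g ∧
        wn T u g ≤ C₂ * wn T (fun t => (E.PV.φ t).symm (u t)) v'

end EvolvingGelfand
/-- The data and assumptions (L1)–(L8) on the operator `L`. -/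
structure LData {T : ℝ} {V H : ℝ → Type*}
    [∀ t, NormedAddCommGroup (V t)] [∀ t, InnerProductSpace ℝ (V t)]
    [∀ t, NormedAddCommGroup (H t)] [∀ t, InnerProductSpace ℝ (H t)]
    (E : EvolvingGelfand T V H) where
  /-- the action of `L(t)` on `V(t)*` -/
  Lstar : ∀ t, StrongDual ℝ (V t) →ₗ[ℝ] StrongDual ℝ (V t)
  /-- the restriction `L_H(t) : H(t) → H(t)` -/
  LH : ∀ t, H t →ₗ[ℝ] H t
  /-- the restriction `L(t) : V(t) → V(t)` -/
  LV : ∀ t, V t →ₗ[ℝ] V t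
  /-- the operator `L̇(t) : V(t) → V(t)*` of (L7) -/
  Ldot : ∀ t, V t →ₗ[ℝ] StrongDual ℝ (V t)
  C₁ : ℝ
  C₂ : ℝ
  C₃ : ℝ
  C₄ : ℝ
  C₅ : ℝ
  C₁_pos : 0 < C₁
  C₂_pos : 0 < C₂
  C₃_pos : 0 < C₃
  C₄_pos : 0 < C₄
  C₅_pos : 0 < C₅
  /-- `L` maps `L²_{V*}` to `L²_{V*}` -/
  hL1_mem : ∀ g : ∀ t, StrongDual ℝ (V t), E.PV.MemL2Xstar g →
    E.PV.MemL2Xstar (fun t => Lstar t (g t))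
  /-- (L1): two-sided norm bound on `L : L²_{V*} → L²_{V*}` -/
  hL1 : ∀ g : ∀ t, StrongDual ℝ (V t), E.PV.MemL2Xstar g →
    C₁ * l2n T g ≤ l2n T (fun t => Lstar t (g t)) ∧
    l2n T (fun t => Lstar t (g t)) ≤ C₂ * l2n T g
  /-- `L_H(t)` is symmetric on `H(t)` -/
  hLH_symm : ∀ᵐ t ∂(volume.restrict (Ioc (0:ℝ) T)), ∀ h k : H t,
    (inner ℝ (LH t h) k : ℝ) = inner ℝ h (LH t k)
  /-- `L_H(t)` maps `V(t)` into `V(t)`: it restricts to `LV` -/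
  hLV_compat : ∀ (t : ℝ) (v : V t), E.ι t (LV t v) = LH t (E.ι t v)
  /-- the action on `V(t)*` restricts to `L_H(t)` on `H(t) ⊂ V(t)*` -/
  hLstar_emb : ∀ (t : ℝ) (h : H t), Lstar t (E.embed t h) = E.embed t (LH t h)
  /-- (L2): `⟨L(t)g, v⟩ = ⟨g, L(t)v⟩` -/
  hL2 : ∀ᵐ t ∂(volume.restrict (Ioc (0:ℝ) T)),
    ∀ (g : StrongDual ℝ (V t)) (v : V t), Lstar t g v = g (LV t v)
  /-- (L3): uniform boundedness of `L(t)` on `H(t)` -/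
  hL3 : ∀ᵐ t ∂(volume.restrict (Ioc (0:ℝ) T)), ∀ h : H t, ‖LH t h‖ ≤ C₃ * ‖h‖
  /-- (L4): uniform coercivity of `L(t)` on `H(t)` -/
  hL4 : ∀ᵐ t ∂(volume.restrict (Ioc (0:ℝ) T)), ∀ h : H t,
    C₄ * ‖h‖ ^ 2 ≤ (inner ℝ (LH t h) h : ℝ)
  /-- (L5): `L` maps `L²_V` to `L²_V` -/
  hL5 : ∀ v : ∀ t, V t, E.PV.MemL2X v → E.PV.MemL2X (fun t => LV t (v t))
  /-- (L6): `v ∈ W(V,V*)` iff `Lv ∈ W(V,V*)` -/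
  hL6 : ∀ v : ∀ t, V t, E.PV.MemL2X v →
    ((∃ g, E.PV.MemL2Xstar g ∧ E.IWMD v g) ↔
      (∃ g, E.PV.MemL2Xstar g ∧ E.IWMD (fun t => LV t (v t)) g))
  /-- `L̇(t)` is symmetric -/
  hLdot_symm : ∀ᵐ t ∂(volume.restrict (Ioc (0:ℝ) T)), ∀ v w : V t,
    Ldot t v w = Ldot t w v
  /-- (L7): the product rule `∂•(Lv) = L̇v + L∂•v` -/
  hL7 : ∀ (v : ∀ t, V t) (g : ∀ t, StrongDual ℝ (V t)),
    E.PV.MemL2X v → E.PV.MemL2Xstar g → E.IWMD v g →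
    E.PV.MemL2Xstar (fun t => Ldot t (v t) + Lstar t (g t)) ∧
    E.IWMD (fun t => LV t (v t)) (fun t => Ldot t (v t) + Lstar t (g t))
  /-- (L8): `‖L̇(t)v‖_{V(t)*} ≤ C₅ ‖v‖_{H(t)}` -/
  hL8 : ∀ᵐ t ∂(volume.restrict (Ioc (0:ℝ) T)), ∀ v : V t,
    ‖Ldot t v‖ ≤ C₅ * ‖E.ι t v‖

/-- The data and assumptions (A1)–(A2) on the operator `A`. -/
structure AData {T : ℝ} {V H : ℝ → Type*}
    [∀ t, NormedAddCommGroup (V t)] [∀ t, InnerProductSpace ℝ (V t)]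
    [∀ t, NormedAddCommGroup (H t)] [∀ t, InnerProductSpace ℝ (H t)]
    (E : EvolvingGelfand T V H) where
  A : ∀ t, V t →ₗ[ℝ] StrongDual ℝ (V t)
  Ca : ℝ
  Cb : ℝ
  Cc : ℝ
  Ca_pos : 0 < Ca
  Cb_pos : 0 < Cb
  Cc_pos : 0 < Cc
  /-- `t ↦ ⟨A(t)v(t), w(t)⟩` is measurable for `v, w ∈ L²_V` -/
  meas : ∀ v w : ∀ t, V t, E.PV.MemL2X v → E.PV.MemL2X w →
    AEMeasurable (fun t => A t (v t) (w t)) (volume.restrict (Ioc (0:ℝ) T))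
  /-- (A1): Gårding coercivity -/
  coercive : ∀ᵐ t ∂(volume.restrict (Ioc (0:ℝ) T)), ∀ v : V t,
    Ca * ‖v‖ ^ 2 - Cb * ‖E.ι t v‖ ^ 2 ≤ A t v v
  /-- (A2): uniform boundedness -/
  bounded : ∀ᵐ t ∂(volume.restrict (Ioc (0:ℝ) T)), ∀ v w : V t,
    |A t v w| ≤ Cc * ‖v‖ * ‖w‖

/-- `u` (with weak material derivative `g` and continuous-in-time pullback
representative `c`, realising the initial value `u(0) = u₀`) solves the problem
`L∂•u + Au + Λu = f`, `u(0) = u₀` of the paper. -/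
def IsSolution {T : ℝ} {V H : ℝ → Type*}
    [∀ t, NormedAddCommGroup (V t)] [∀ t, InnerProductSpace ℝ (V t)]
    [∀ t, NormedAddCommGroup (H t)] [∀ t, InnerProductSpace ℝ (H t)]
    (E : EvolvingGelfand T V H) (LD : LData E) (AD : AData E)
    (f : ∀ t, StrongDual ℝ (V t)) (u₀ : H 0)
    (u : ∀ t, V t) (g : ∀ t, StrongDual ℝ (V t)) (c : ℝ → H 0) : Prop :=
  E.PV.MemL2X u ∧ E.PV.MemL2Xstar g ∧ E.IWMD u g ∧
  (∀ᵐ t ∂(volume.restrict (Ioc (0:ℝ) T)), ∀ v : V t,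
    LD.Lstar t (g t) v + AD.A t (u t) v + E.lam t (E.ι t (u t)) (E.ι t v) = f t v) ∧
  ContinuousOn c (Icc (0:ℝ) T) ∧
  (∀ᵐ t ∂(volume.restrict (Ioc (0:ℝ) T)), c t = E.ι 0 ((E.PV.φ t).symm (u t))) ∧
  c 0 = u₀
section AuxAES
open EvolvingGelfand

variable {T : ℝ} {V H : ℝ → Type*}
  [∀ t, NormedAddCommGroup (V t)] [∀ t, InnerProductSpace ℝ (V t)]
  [∀ t, NormedAddCommGroup (H t)] [∀ t, InnerProductSpace ℝ (H t)]

/-- The moving inner product pulled back to `H 0`. -/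
def betaH (E : EvolvingGelfand T V H) (s : ℝ) (x y : H 0) : ℝ :=
  inner ℝ (E.PH.φ s x) (E.PH.φ s y)

lemma inner_eq_div_four {F : Type*} [NormedAddCommGroup F] [InnerProductSpace ℝ F]
    (x y : F) : (inner ℝ x y : ℝ) = (‖x + y‖ ^ 2 - ‖x - y‖ ^ 2) / 4 := by
  have h1 := norm_add_sq_real x y
  have h2 := norm_sub_sq_real x y
  nlinarith [h1, h2]

lemma betaH_eq (E : EvolvingGelfand T V H) (s : ℝ) (x y : H 0) :
    betaH E s x y = (‖E.PH.φ s (x + y)‖ ^ 2 - ‖E.PH.φ s (x - y)‖ ^ 2) / 4 := by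
  rw [betaH, inner_eq_div_four]; simp only [map_add, map_sub]

lemma betaH_add_right (E : EvolvingGelfand T V H) (s : ℝ) (x y z : H 0) :
    betaH E s x (y + z) = betaH E s x y + betaH E s x z := by
  simp [betaH, map_add, inner_add_right]

lemma betaH_smul_right (E : EvolvingGelfand T V H) (s : ℝ) (x y : H 0) (c : ℝ) :
    betaH E s x (c • y) = c * betaH E s x y := by
  simp [betaH, _root_.map_smul, inner_smul_right]

lemma betaH_comm (E : EvolvingGelfand T V H) (s : ℝ) (x y : H 0) :
    betaH E s x y = betaH E s y x := real_inner_comm _ _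

lemma abs_betaH_le (E : EvolvingGelfand T V H) {s : ℝ} (hs : s ∈ Icc (0:ℝ) T) (x y : H 0) :
    |betaH E s x y| ≤ (E.PH.C * ‖x‖) * (E.PH.C * ‖y‖) := by
  refine (abs_real_inner_le_norm _ _).trans ?_
  exact mul_le_mul (E.PH.norm_map_le s hs x) (E.PH.norm_map_le s hs y) (norm_nonneg _)
    (mul_nonneg E.PH.C_pos.le (norm_nonneg _))

lemma hasDeriv_betaH (E : EvolvingGelfand T V H) (x y : H 0) {t : ℝ}
    (ht : t ∈ Icc (0:ℝ) T) :
    HasDerivWithinAt (fun s => betaH E s x y) (E.lamHat t x y) (Icc (0:ℝ) T) t := by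
  have h1 := E.θ_hasDeriv (x + y) t ht
  have h2 := E.θ_hasDeriv (x - y) t ht
  have h3 := (h1.sub h2).div_const 4
  have e : (fun s => betaH E s x y)
      = fun s => (‖E.PH.φ s (x + y)‖ ^ 2 - ‖E.PH.φ s (x - y)‖ ^ 2) / 4 :=
    funext fun s => betaH_eq E s x y
  rw [e]
  exact h3

lemma continuousOn_betaH (E : EvolvingGelfand T V H) (x y : H 0) :
    ContinuousOn (fun s => betaH E s x y) (Icc (0:ℝ) T) :=
  fun t ht => (hasDeriv_betaH E x y ht).continuousWithinAt

private lemma derivWithin_unique {f : ℝ → ℝ} {a b : ℝ} {s : Set ℝ} {t : ℝ}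
    (hu : UniqueDiffWithinAt ℝ s t)
    (h1 : HasDerivWithinAt f a s t) (h2 : HasDerivWithinAt f b s t) : a = b := by
  rw [← h1.derivWithin hu, ← h2.derivWithin hu]

lemma lamHat_add_right (E : EvolvingGelfand T V H) (hT : 0 < T) {t : ℝ}
    (ht : t ∈ Icc (0:ℝ) T) (x y z : H 0) :
    E.lamHat t x (y + z) = E.lamHat t x y + E.lamHat t x z := by
  have h1 := hasDeriv_betaH E x (y + z) ht
  have h2 := (hasDeriv_betaH E x y ht).add (hasDeriv_betaH E x z ht)
  have e : (fun s => betaH E s x (y + z)) = fun s => betaH E s x y + betaH E s x z :=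
    funext fun s => betaH_add_right E s x y z
  rw [e] at h1
  exact derivWithin_unique (uniqueDiffOn_Icc hT t ht) h1 h2

lemma lamHat_smul_right (E : EvolvingGelfand T V H) (hT : 0 < T) {t : ℝ}
    (ht : t ∈ Icc (0:ℝ) T) (x y : H 0) (c : ℝ) :
    E.lamHat t x (c • y) = c * E.lamHat t x y := by
  have h1 := hasDeriv_betaH E x (c • y) ht
  have h2 := (hasDeriv_betaH E x y ht).const_mul c
  have e : (fun s => betaH E s x (c • y)) = fun s => c * betaH E s x y :=
    funext fun s => betaH_smul_right E s x y c
  rw [e] at h1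
  exact derivWithin_unique (uniqueDiffOn_Icc hT t ht) h1 h2

lemma abs_lamHat_le (E : EvolvingGelfand T V H) {t : ℝ} (ht : t ∈ Icc (0:ℝ) T)
    (x y : H 0) : |E.lamHat t x y| ≤ |E.Cθ| / 4 * (‖x‖ * ‖y‖) := by
  have h := E.θ_bound t ht x y
  have h2 : E.Cθ * ‖x‖ * ‖y‖ ≤ |E.Cθ| * ‖x‖ * ‖y‖ := by
    calc E.Cθ * ‖x‖ * ‖y‖ = E.Cθ * (‖x‖ * ‖y‖) := by ring
      _ ≤ |E.Cθ| * (‖x‖ * ‖y‖) :=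
          mul_le_mul_of_nonneg_right (le_abs_self _) (by positivity)
      _ = |E.Cθ| * ‖x‖ * ‖y‖ := by ring
  rw [EvolvingGelfand.lamHat, abs_div, abs_of_pos (by norm_num : (0:ℝ) < 4)]
  have := h.trans h2
  linarith

lemma continuous_lamHat_pair (E : EvolvingGelfand T V H) {t : ℝ} (ht : t ∈ Icc (0:ℝ) T) :
    Continuous (fun p : H 0 × H 0 => E.lamHat t p.1 p.2) := by
  have hc := E.θ_cont t ht
  exact ((hc.comp (continuous_fst.add continuous_snd)).sub
    (hc.comp (continuous_fst.sub continuous_snd))).div_const 4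

end AuxAES
section AuxAES2
open EvolvingGelfand

variable {T : ℝ} {V H : ℝ → Type*}
  [∀ t, NormedAddCommGroup (V t)] [∀ t, InnerProductSpace ℝ (V t)]
  [∀ t, NormedAddCommGroup (H t)] [∀ t, InnerProductSpace ℝ (H t)]

lemma isFiniteRestrictIoc (T : ℝ) : IsFiniteMeasure (volume.restrict (Ioc (0:ℝ) T)) := by
  constructor
  rw [Measure.restrict_apply_univ, Real.volume_Ioc]
  exact ENNReal.ofReal_lt_top

lemma ae_mem_Icc' (T : ℝ) :
    ∀ᵐ t ∂(volume.restrict (Ioc (0:ℝ) T)), t ∈ Icc (0:ℝ) T := by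
  filter_upwards [ae_restrict_mem measurableSet_Ioc] with t ht
  exact Ioc_subset_Icc_self ht

lemma ae_mem_Ioo' (T : ℝ) :
    ∀ᵐ t ∂(volume.restrict (Ioc (0:ℝ) T)), t ∈ Ioo (0:ℝ) T := by
  have h2 : ∀ᵐ t ∂(volume.restrict (Ioc (0:ℝ) T)), t ≠ T := by
    refine ae_restrict_of_ae ?_
    rw [ae_iff]
    have : {t : ℝ | ¬ t ≠ T} = {T} := by ext t; simp
    rw [this]
    exact Real.volume_singleton
  filter_upwards [ae_restrict_mem measurableSet_Ioc, h2] with t ht hne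
  exact ⟨ht.1, lt_of_le_of_ne ht.2 hne⟩

/-- Composition of an a.e.-strongly-measurable function with a time-dependent family of
continuous maps, each of which is a.e.-strongly-measurable in time at fixed argument. -/
lemma aestronglyMeasurable_comp_family {α : Type*} {mα : MeasurableSpace α} {μ : Measure α}
    {E F : Type*} [NormedAddCommGroup E] [NormedAddCommGroup F]
    {g : α → E → F} {f : α → E}
    (hf : AEStronglyMeasurable f μ)
    (hgc : ∀ c : E, AEStronglyMeasurable (fun t => g t c) μ)
    (hgcont : ∀ᵐ t ∂μ, Continuous (g t)) :
    AEStronglyMeasurable (fun t => g t (f t)) μ := by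
  have main : AEStronglyMeasurable (fun t => g t (hf.mk f t)) μ := by
    have hsm := hf.stronglyMeasurable_mk
    have happrox : ∀ n, AEStronglyMeasurable (fun t => g t (hsm.approx n t)) μ := by
      intro n
      set s := hsm.approx n with hs
      have e : (fun t => g t (s t))
          = fun t => ∑ c ∈ s.range, (⇑s ⁻¹' {c}).indicator (fun t => g t c) t := by
        funext t
        rw [Finset.sum_eq_single_of_mem (s t) (s.mem_range_self t)]
        · rw [Set.indicator_of_mem (by simp : t ∈ ⇑s ⁻¹' {s t})]
        · intro c _ hne
          exact Set.indicator_of_notMem (by simp [hne.symm]) _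
      rw [e]
      apply Finset.aestronglyMeasurable_fun_sum
      intro c _
      exact (hgc c).indicator (s.measurableSet_fiber c)
    refine aestronglyMeasurable_of_tendsto_ae atTop happrox ?_
    filter_upwards [hgcont] with t hc
    exact (hc.tendsto (hf.mk f t)).comp (hsm.tendsto_approx t)
  refine main.congr ?_
  filter_upwards [hf.ae_eq_mk] with t h
  rw [← h]

lemma aesm_lamHat_const (E : EvolvingGelfand T V H) (hT : 0 < T) (x y : H 0) :
    AEStronglyMeasurable (fun t => E.lamHat t x y) (volume.restrict (Ioc (0:ℝ) T)) := by
  have hm : Measurable (deriv (fun s => betaH E s x y)) := measurable_deriv _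
  refine hm.aestronglyMeasurable.congr ?_
  filter_upwards [ae_mem_Ioo' T] with t ht
  have h1 : HasDerivAt (fun s => betaH E s x y) (E.lamHat t x y) t :=
    (hasDeriv_betaH E x y (Ioo_subset_Icc_self ht)).hasDerivAt
      (Icc_mem_nhds ht.1 ht.2)
  exact h1.deriv

lemma aesm_lamHat_comp (E : EvolvingGelfand T V H) (hT : 0 < T)
    {x y : ℝ → H 0}
    (hx : AEStronglyMeasurable x (volume.restrict (Ioc (0:ℝ) T)))
    (hy : AEStronglyMeasurable y (volume.restrict (Ioc (0:ℝ) T))) :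
    AEStronglyMeasurable (fun t => E.lamHat t (x t) (y t))
      (volume.restrict (Ioc (0:ℝ) T)) := by
  have := aestronglyMeasurable_comp_family (μ := volume.restrict (Ioc (0:ℝ) T))
    (g := fun t (p : H 0 × H 0) => E.lamHat t p.1 p.2) (f := fun t => (x t, y t))
    (hx.prodMk hy)
    (fun c => aesm_lamHat_const E hT c.1 c.2)
    (by filter_upwards [ae_mem_Icc' T] with t ht
        exact continuous_lamHat_pair E ht)
  exact this

lemma continuous_betaH_pair (E : EvolvingGelfand T V H) (t : ℝ) :
    Continuous (fun p : H 0 × H 0 => betaH E t p.1 p.2) := by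
  apply Continuous.inner
  · exact (E.PH.φ t).continuous.comp continuous_fst
  · exact (E.PH.φ t).continuous.comp continuous_snd

lemma aesm_betaH_const (E : EvolvingGelfand T V H) (x y : H 0) :
    AEStronglyMeasurable (fun t => betaH E t x y) (volume.restrict (Ioc (0:ℝ) T)) := by
  have := (continuousOn_betaH E x y (T := T)).mono (Ioc_subset_Icc_self)
  exact this.aestronglyMeasurable measurableSet_Ioc

lemma aesm_betaH_comp (E : EvolvingGelfand T V H)
    {x y : ℝ → H 0}
    (hx : AEStronglyMeasurable x (volume.restrict (Ioc (0:ℝ) T)))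
    (hy : AEStronglyMeasurable y (volume.restrict (Ioc (0:ℝ) T))) :
    AEStronglyMeasurable (fun t => betaH E t (x t) (y t))
      (volume.restrict (Ioc (0:ℝ) T)) := by
  exact aestronglyMeasurable_comp_family (μ := volume.restrict (Ioc (0:ℝ) T))
    (g := fun t (p : H 0 × H 0) => betaH E t p.1 p.2) (f := fun t => (x t, y t))
    (hx.prodMk hy)
    (fun c => aesm_betaH_const E c.1 c.2)
    (Eventually.of_forall fun t => continuous_betaH_pair E t)

end AuxAES2
section AuxAES3
open EvolvingGelfand

variable {T : ℝ} {V H : ℝ → Type*}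
  [∀ t, NormedAddCommGroup (V t)] [∀ t, InnerProductSpace ℝ (V t)]
  [∀ t, NormedAddCommGroup (H t)] [∀ t, InnerProductSpace ℝ (H t)]

lemma pullDual_apply {X : ℝ → Type*} [∀ t, NormedAddCommGroup (X t)]
    [∀ t, InnerProductSpace ℝ (X t)] (P : CompatiblePair T X) (t : ℝ)
    (f : StrongDual ℝ (X t)) (v : X 0) :
    P.pullDual t f v = f (P.φ t v) := rfl

lemma norm_pullDual_le {X : ℝ → Type*} [∀ t, NormedAddCommGroup (X t)]
    [∀ t, InnerProductSpace ℝ (X t)] (P : CompatiblePair T X) {t : ℝ}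
    (ht : t ∈ Icc (0:ℝ) T) (f : StrongDual ℝ (X t)) :
    ‖P.pullDual t f‖ ≤ P.C * ‖f‖ := by
  refine ContinuousLinearMap.opNorm_le_bound _
    (mul_nonneg P.C_pos.le (norm_nonneg _)) fun v => ?_
  calc ‖P.pullDual t f v‖ = ‖f (P.φ t v)‖ := rfl
    _ ≤ ‖f‖ * ‖P.φ t v‖ := f.le_opNorm _
    _ ≤ ‖f‖ * (P.C * ‖v‖) := by
        exact mul_le_mul_of_nonneg_left (P.norm_map_le t ht v) (norm_nonneg _)
    _ = P.C * ‖f‖ * ‖v‖ := by ring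

/-- Integrability of `t ↦ f(t)(φ_t (w t))` for `f ∈ L²_{V*}` and bounded measurable `w`. -/
lemma integrable_dual_eval (E : EvolvingGelfand T V H)
    {f : ∀ t, StrongDual ℝ (V t)} (hf : E.PV.MemL2Xstar f)
    {w : ℝ → V 0} (hw : AEStronglyMeasurable w (volume.restrict (Ioc (0:ℝ) T)))
    {M : ℝ} (hM : ∀ t, ‖w t‖ ≤ M) :
    Integrable (fun t => f t (E.PV.φ t (w t))) (volume.restrict (Ioc (0:ℝ) T)) := by
  haveI := isFiniteRestrictIoc T
  have hnorm : Integrable (fun t => ‖E.PV.pullDual t (f t)‖ * M)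
      (volume.restrict (Ioc (0:ℝ) T)) :=
    (hf.norm.integrable one_le_two).mul_const M
  have haesm : AEStronglyMeasurable (fun t => (E.PV.pullDual t (f t)) (w t))
      (volume.restrict (Ioc (0:ℝ) T)) := by
    have hpair := hf.aestronglyMeasurable.prodMk hw
    exact isBoundedBilinearMap_apply.continuous.comp_aestronglyMeasurable hpair
  refine (hnorm.mono' haesm ?_).congr (Eventually.of_forall fun t => rfl)
  refine Eventually.of_forall fun t => ?_
  calc ‖(E.PV.pullDual t (f t)) (w t)‖
      ≤ ‖E.PV.pullDual t (f t)‖ * ‖w t‖ := ContinuousLinearMap.le_opNorm _ _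
    _ ≤ ‖E.PV.pullDual t (f t)‖ * M :=
        mul_le_mul_of_nonneg_left (hM t) (norm_nonneg _)

/-- Integrability of `t ↦ β(t)(ι₀ q(t), ι₀ w(t))` for `q ∈ L²(V₀)` and bounded `w`. -/
lemma integrable_betaH (E : EvolvingGelfand T V H)
    {q : ℝ → V 0} (hq : MemLp q 2 (volume.restrict (Ioc (0:ℝ) T)))
    {w : ℝ → V 0} (hw : AEStronglyMeasurable w (volume.restrict (Ioc (0:ℝ) T)))
    {M : ℝ} (hM : ∀ t, ‖w t‖ ≤ M) :
    Integrable (fun t => betaH E t (E.ι 0 (q t)) (E.ι 0 (w t)))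
      (volume.restrict (Ioc (0:ℝ) T)) := by
  haveI := isFiniteRestrictIoc T
  have hnorm : Integrable
      (fun t => E.PH.C * E.PH.C * ‖E.ι 0‖ * ‖E.ι 0‖ * M * ‖q t‖)
      (volume.restrict (Ioc (0:ℝ) T)) :=
    (hq.norm.integrable one_le_two).const_mul _
  have haesm := aesm_betaH_comp E
    (x := fun t => E.ι 0 (q t)) (y := fun t => E.ι 0 (w t))
    ((E.ι 0).continuous.comp_aestronglyMeasurable hq.aestronglyMeasurable)
    ((E.ι 0).continuous.comp_aestronglyMeasurable hw)
  refine hnorm.mono' haesm ?_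
  filter_upwards [ae_mem_Icc' T] with t ht
  rw [Real.norm_eq_abs]
  refine (abs_betaH_le E ht _ _).trans ?_
  have h1 : ‖E.ι 0 (q t)‖ ≤ ‖E.ι 0‖ * ‖q t‖ := (E.ι 0).le_opNorm _
  have h2 : ‖E.ι 0 (w t)‖ ≤ ‖E.ι 0‖ * M :=
    ((E.ι 0).le_opNorm _).trans (mul_le_mul_of_nonneg_left (hM t) (norm_nonneg _))
  have hC := E.PH.C_pos.le
  calc (E.PH.C * ‖E.ι 0 (q t)‖) * (E.PH.C * ‖E.ι 0 (w t)‖)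
      ≤ (E.PH.C * (‖E.ι 0‖ * ‖q t‖)) * (E.PH.C * (‖E.ι 0‖ * M)) := by
        apply mul_le_mul
        · exact mul_le_mul_of_nonneg_left h1 hC
        · exact mul_le_mul_of_nonneg_left h2 hC
        · positivity
        · positivity
    _ = E.PH.C * E.PH.C * ‖E.ι 0‖ * ‖E.ι 0‖ * M * ‖q t‖ := by ring

/-- Integrability of `t ↦ λ̂(t; ι₀ q(t), ι₀ w(t))` for `q ∈ L²(V₀)` and bounded `w`. -/
lemma integrable_lamHat (E : EvolvingGelfand T V H) (hT : 0 < T)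
    {q : ℝ → V 0} (hq : MemLp q 2 (volume.restrict (Ioc (0:ℝ) T)))
    {w : ℝ → V 0} (hw : AEStronglyMeasurable w (volume.restrict (Ioc (0:ℝ) T)))
    {M : ℝ} (hM : ∀ t, ‖w t‖ ≤ M) :
    Integrable (fun t => E.lamHat t (E.ι 0 (q t)) (E.ι 0 (w t)))
      (volume.restrict (Ioc (0:ℝ) T)) := by
  haveI := isFiniteRestrictIoc T
  have hM0 : 0 ≤ M := (norm_nonneg (w 0)).trans (hM 0)
  have hnorm : Integrable
      (fun t => |E.Cθ| / 4 * ‖E.ι 0‖ * ‖E.ι 0‖ * M * ‖q t‖)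
      (volume.restrict (Ioc (0:ℝ) T)) :=
    (hq.norm.integrable one_le_two).const_mul _
  have haesm := aesm_lamHat_comp E hT
    (x := fun t => E.ι 0 (q t)) (y := fun t => E.ι 0 (w t))
    ((E.ι 0).continuous.comp_aestronglyMeasurable hq.aestronglyMeasurable)
    ((E.ι 0).continuous.comp_aestronglyMeasurable hw)
  refine hnorm.mono' haesm ?_
  filter_upwards [ae_mem_Icc' T] with t ht
  rw [Real.norm_eq_abs]
  refine (abs_lamHat_le E ht _ _).trans ?_
  have h1 : ‖E.ι 0 (q t)‖ ≤ ‖E.ι 0‖ * ‖q t‖ := (E.ι 0).le_opNorm _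
  have h2 : ‖E.ι 0 (w t)‖ ≤ ‖E.ι 0‖ * M :=
    ((E.ι 0).le_opNorm _).trans (mul_le_mul_of_nonneg_left (hM t) (norm_nonneg _))
  calc |E.Cθ| / 4 * (‖E.ι 0 (q t)‖ * ‖E.ι 0 (w t)‖)
      ≤ |E.Cθ| / 4 * ((‖E.ι 0‖ * ‖q t‖) * (‖E.ι 0‖ * M)) := by
        refine mul_le_mul_of_nonneg_left ?_ (by positivity)
        exact mul_le_mul h1 h2 (norm_nonneg _) (by positivity)
    _ = |E.Cθ| / 4 * ‖E.ι 0‖ * ‖E.ι 0‖ * M * ‖q t‖ := by ring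

end AuxAES3
section AuxAES4
open EvolvingGelfand

variable {T : ℝ} {V H : ℝ → Type*}
  [∀ t, NormedAddCommGroup (V t)] [∀ t, InnerProductSpace ℝ (V t)]
  [∀ t, NormedAddCommGroup (H t)] [∀ t, InnerProductSpace ℝ (H t)]

lemma tendsto_betaH (E : EvolvingGelfand T V H) {x : H 0} {w : ℝ → H 0} {t : ℝ}
    (ht : t ∈ Icc (0:ℝ) T) {l : Filter ℝ} (hl : l ≤ 𝓝[Icc (0:ℝ) T] t) {w₀ : H 0}
    (hw : Tendsto w l (𝓝 w₀)) :
    Tendsto (fun s => betaH E s x (w s)) l (𝓝 (betaH E t x w₀)) := by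
  have hmem : ∀ᶠ s in l, s ∈ Icc (0:ℝ) T := hl self_mem_nhdsWithin
  have hdecomp : ∀ s, betaH E s x (w s) = betaH E s x (w s - w₀) + betaH E s x w₀ := by
    intro s
    rw [← betaH_add_right, sub_add_cancel]
  have h2 : Tendsto (fun s => betaH E s x w₀) l (𝓝 (betaH E t x w₀)) :=
    ((continuousOn_betaH E x w₀ t ht).tendsto).mono_left hl
  have h1 : Tendsto (fun s => betaH E s x (w s - w₀)) l (𝓝 0) := by
    have hnorm : Tendsto (fun s => (E.PH.C * ‖x‖) * (E.PH.C * ‖w s - w₀‖)) l (𝓝 0) := by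
      have : Tendsto (fun s => ‖w s - w₀‖) l (𝓝 0) := by
        have := hw.sub_const w₀
        rw [sub_self] at this
        exact this.norm.congr' (Eventually.of_forall fun s => rfl) |>.mono_right
          (by rw [norm_zero])
      have h := ((this.const_mul E.PH.C).const_mul (E.PH.C * ‖x‖))
      simpa using h
    refine squeeze_zero_norm' ?_ hnorm
    filter_upwards [hmem] with s hs
    rw [Real.norm_eq_abs]
    refine (abs_betaH_le E hs x _).trans ?_
    exact le_of_eq rfl
  have := h1.add h2
  rw [zero_add] at this
  exact this.congr (fun s => (hdecomp s).symm)

lemma hasDerivWithinAt_betaH_comp (E : EvolvingGelfand T V H) {x : H 0} {y : ℝ → H 0}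
    {y' : H 0} {t : ℝ} (ht : t ∈ Icc (0:ℝ) T) (hy : HasDerivAt y y' t) :
    HasDerivWithinAt (fun s => betaH E s x (y s))
      (E.lamHat t x (y t) + betaH E t x y') (Icc (0:ℝ) T) t := by
  rw [hasDerivWithinAt_iff_tendsto_slope]
  have hsub : Icc (0:ℝ) T \ {t} ⊆ {t}ᶜ := fun s hs => hs.2
  have hl : 𝓝[Icc (0:ℝ) T \ {t}] t ≤ 𝓝[Icc (0:ℝ) T] t :=
    nhdsWithin_mono t diff_subset
  have h1 : Tendsto (fun s => betaH E s x (slope y t s)) (𝓝[Icc (0:ℝ) T \ {t}] t)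
      (𝓝 (betaH E t x y')) := by
    refine tendsto_betaH E ht hl ?_
    exact (hasDerivAt_iff_tendsto_slope.1 hy).mono_left (nhdsWithin_mono t hsub)
  have h2 : Tendsto (slope (fun s => betaH E s x (y t)) t) (𝓝[Icc (0:ℝ) T \ {t}] t)
      (𝓝 (E.lamHat t x (y t))) :=
    hasDerivWithinAt_iff_tendsto_slope.1 (hasDeriv_betaH E x (y t) ht)
  have key : ∀ s, slope (fun s => betaH E s x (y s)) t s
      = betaH E s x (slope y t s) + slope (fun s => betaH E s x (y t)) t s := by
    intro s
    simp only [slope_def_field, slope, vsub_eq_sub, smul_eq_mul]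
    have e1 : betaH E s x (y s) - betaH E t x (y t)
        = betaH E s x (y s - y t) + (betaH E s x (y t) - betaH E t x (y t)) := by
      have : betaH E s x (y s) = betaH E s x (y s - y t) + betaH E s x (y t) := by
        rw [← betaH_add_right, sub_add_cancel]
      rw [this]; ring
    rw [e1, mul_add]
    congr 1
    rw [betaH_smul_right]
  have := h1.add h2
  rw [show betaH E t x y' + E.lamHat t x (y t) = E.lamHat t x (y t) + betaH E t x y'
    from add_comm _ _] at this
  exact this.congr (fun s => (key s).symm)

end AuxAES4
section AuxAES5
open EvolvingGelfand

variable {T : ℝ} {V H : ℝ → Type*}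
  [∀ t, NormedAddCommGroup (V t)] [∀ t, InnerProductSpace ℝ (V t)]
  [∀ t, NormedAddCommGroup (H t)] [∀ t, InnerProductSpace ℝ (H t)]

lemma integrableOn_lamHat_add_betaH (E : EvolvingGelfand T V H) (hT : 0 < T)
    (x : H 0) {y yd : ℝ → H 0} (hcy : Continuous y) (hcyd : Continuous yd) :
    Integrable (fun t => E.lamHat t x (y t) + betaH E t x (yd t))
      (volume.restrict (Ioc (0:ℝ) T)) := by
  haveI := isFiniteRestrictIoc T
  rcases (isCompact_Icc (a := (0:ℝ)) (b := T)).exists_bound_of_continuousOn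
    hcy.continuousOn with ⟨My, hMy⟩
  rcases (isCompact_Icc (a := (0:ℝ)) (b := T)).exists_bound_of_continuousOn
    hcyd.continuousOn with ⟨Myd, hMyd⟩
  have haesm : AEStronglyMeasurable (fun t => E.lamHat t x (y t) + betaH E t x (yd t))
      (volume.restrict (Ioc (0:ℝ) T)) := by
    refine AEStronglyMeasurable.add ?_ ?_
    · exact aesm_lamHat_comp E hT aestronglyMeasurable_const hcy.aestronglyMeasurable
    · exact aesm_betaH_comp E aestronglyMeasurable_const hcyd.aestronglyMeasurable
  refine (integrable_const (|E.Cθ| / 4 * (‖x‖ * My)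
      + (E.PH.C * ‖x‖) * (E.PH.C * Myd))).mono' haesm ?_
  filter_upwards [ae_mem_Icc' T] with t ht
  rw [Real.norm_eq_abs]
  refine (abs_add_le _ _).trans ?_
  refine add_le_add ?_ ?_
  · refine (abs_lamHat_le E ht _ _).trans ?_
    exact mul_le_mul_of_nonneg_left
      (mul_le_mul_of_nonneg_left (hMy t ht) (norm_nonneg x)) (by positivity)
  · refine (abs_betaH_le E ht _ _).trans ?_
    exact mul_le_mul_of_nonneg_left
      (mul_le_mul_of_nonneg_left (hMyd t ht) E.PH.C_pos.le)
      (mul_nonneg E.PH.C_pos.le (norm_nonneg x))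

/-- Fundamental theorem of calculus for the moving inner product, constant first slot. -/
lemma integral_lamHat_add_betaH_eq_zero (E : EvolvingGelfand T V H) (hT : 0 < T)
    {x : H 0} {y yd : ℝ → H 0}
    (hy : ∀ t, HasDerivAt y (yd t) t) (hcy : Continuous y) (hcyd : Continuous yd)
    (hy0 : y 0 = 0) (hyT : y T = 0) :
    ∫ t in Ioc (0:ℝ) T, (E.lamHat t x (y t) + betaH E t x (yd t)) = 0 := by
  have hderiv : ∀ t ∈ Icc (0:ℝ) T, HasDerivWithinAt (fun s => betaH E s x (y s))
      (E.lamHat t x (y t) + betaH E t x (yd t)) (Icc (0:ℝ) T) t :=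
    fun t ht => hasDerivWithinAt_betaH_comp E ht (hy t)
  have hcont : ContinuousOn (fun s => betaH E s x (y s)) (Icc (0:ℝ) T) :=
    fun t ht => (hderiv t ht).continuousWithinAt
  have hIoi : ∀ t ∈ Ioo (0:ℝ) T, HasDerivWithinAt (fun s => betaH E s x (y s))
      (E.lamHat t x (y t) + betaH E t x (yd t)) (Ioi t) t := fun t ht =>
    ((hderiv t (Ioo_subset_Icc_self ht)).hasDerivAt
      (Icc_mem_nhds ht.1 ht.2)).hasDerivWithinAt
  have hint : IntervalIntegrable
      (fun t => E.lamHat t x (y t) + betaH E t x (yd t)) volume 0 T := by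
    rw [intervalIntegrable_iff_integrableOn_Ioc_of_le hT.le]
    exact integrableOn_lamHat_add_betaH E hT x hcy hcyd
  have := intervalIntegral.integral_eq_sub_of_hasDeriv_right_of_le hT.le hcont hIoi hint
  rw [← intervalIntegral.integral_of_le hT.le, this]
  simp [hy0, hyT, betaH]

lemma memL2X_phi_const (E : EvolvingGelfand T V H) (v₀ : V 0) :
    E.PV.MemL2X (fun t => E.PV.φ t v₀) := by
  haveI := isFiniteRestrictIoc T
  have : (fun t => (E.PV.φ t).symm (E.PV.φ t v₀)) = fun _ => v₀ := by
    funext t; exact (E.PV.φ t).symm_apply_apply v₀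
  rw [CompatiblePair.MemL2X, this]
  exact memLp_const v₀

lemma memL2Xstar_zero (E : EvolvingGelfand T V H) :
    E.PV.MemL2Xstar (fun t => (0 : StrongDual ℝ (V t))) := by
  haveI := isFiniteRestrictIoc T
  have : (fun t => E.PV.pullDual t (0 : StrongDual ℝ (V t)))
      = fun _ => (0 : StrongDual ℝ (V 0)) := by
    funext t
    ext v
    rfl
  rw [CompatiblePair.MemL2Xstar, this]
  exact memLp_const 0

lemma u_eq_phi_pullback (E : EvolvingGelfand T V H) (u : ∀ t, V t) (t : ℝ) :
    u t = E.PV.φ t ((E.PV.φ t).symm (u t)) := ((E.PV.φ t).apply_symm_apply (u t)).symm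

lemma inner_iota_eq (E : EvolvingGelfand T V H) (t : ℝ) (a b : V 0) :
    (inner ℝ (E.ι t (E.PV.φ t a)) (E.ι t (E.PV.φ t b)) : ℝ)
      = betaH E t (E.ι 0 a) (E.ι 0 b) := by
  rw [E.ι_compat, E.ι_compat]; rfl

lemma lam_iota_eq (E : EvolvingGelfand T V H) (t : ℝ) (a b : V 0) :
    E.lam t (E.ι t (E.PV.φ t a)) (E.ι t (E.PV.φ t b))
      = E.lamHat t (E.ι 0 a) (E.ι 0 b) := by
  rw [E.ι_compat, E.ι_compat, EvolvingGelfand.lam,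
    (E.PH.φ t).symm_apply_apply, (E.PH.φ t).symm_apply_apply]

/-- The constant-pullback path `t ↦ φ_t v₀` has zero material derivative. -/
lemma iwmd_phi_const (E : EvolvingGelfand T V H) (hT : 0 < T) (v₀ : V 0) :
    E.IWMD (fun t => E.PV.φ t v₀) (fun _ => (0 : StrongDual ℝ (V _))) := by
  intro η₀ hη hsupp
  have hzero : (∫ t in Ioc (0:ℝ) T,
      (0 : StrongDual ℝ (V t)) (E.PV.φ t (η₀ t))) = 0 := by
    simp
  rw [hzero]
  have hdiff : Differentiable ℝ η₀ := hη.differentiable (by simp)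
  have hy : ∀ t, HasDerivAt (fun s => E.ι 0 (η₀ s)) (E.ι 0 (deriv η₀ t)) t := fun t =>
    (E.ι 0).hasFDerivAt.comp_hasDerivAt t (hdiff t).hasDerivAt
  have hcy : Continuous (fun s => E.ι 0 (η₀ s)) := (E.ι 0).continuous.comp hdiff.continuous
  have hcyd : Continuous (fun s => E.ι 0 (deriv η₀ s)) :=
    (E.ι 0).continuous.comp (hη.continuous_deriv (by exact_mod_cast le_top))
  have h00 : (0:ℝ) ∉ Ioo (0:ℝ) T := by simp
  have hTT : T ∉ Ioo (0:ℝ) T := by simp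
  have h0T : η₀ 0 = 0 ∧ η₀ T = 0 :=
    ⟨image_eq_zero_of_notMem_tsupport (fun hm => h00 (hsupp hm)),
     image_eq_zero_of_notMem_tsupport (fun hm => hTT (hsupp hm))⟩
  have key := integral_lamHat_add_betaH_eq_zero E hT (x := E.ι 0 v₀)
    (y := fun s => E.ι 0 (η₀ s)) (yd := fun s => E.ι 0 (deriv η₀ s))
    hy hcy hcyd (by simp only [h0T.1, map_zero]) (by simp only [h0T.2, map_zero])
  have hsplit := integrableOn_lamHat_add_betaH E hT (E.ι 0 v₀) hcy hcyd
  -- rewrite the two goal integrals in betaH/lamHat form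
  have e1 : ∀ t, (inner ℝ (E.ι t (E.PV.φ t v₀)) (E.ι t (E.PV.φ t (deriv η₀ t))) : ℝ)
      = betaH E t (E.ι 0 v₀) (E.ι 0 (deriv η₀ t)) := fun t => inner_iota_eq E t _ _
  have e2 : ∀ t, E.lam t (E.ι t (E.PV.φ t v₀)) (E.ι t (E.PV.φ t (η₀ t)))
      = E.lamHat t (E.ι 0 v₀) (E.ι 0 (η₀ t)) := fun t => lam_iota_eq E t _ _
  simp only [e1, e2]
  have hil : Integrable (fun t => E.lamHat t (E.ι 0 v₀) (E.ι 0 (η₀ t)))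
      (volume.restrict (Ioc (0:ℝ) T)) := by
    haveI := isFiniteRestrictIoc T
    rcases (isCompact_Icc (a := (0:ℝ)) (b := T)).exists_bound_of_continuousOn
      (hcy.continuousOn) with ⟨My, hMy⟩
    refine (integrable_const (|E.Cθ| / 4 * (‖E.ι 0 v₀‖ * My))).mono'
      (aesm_lamHat_comp E hT aestronglyMeasurable_const hcy.aestronglyMeasurable) ?_
    filter_upwards [ae_mem_Icc' T] with t ht
    rw [Real.norm_eq_abs]
    refine (abs_lamHat_le E ht _ _).trans ?_
    exact mul_le_mul_of_nonneg_left
      (mul_le_mul_of_nonneg_left (hMy t ht) (norm_nonneg _)) (by positivity)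
  have hib : Integrable (fun t => betaH E t (E.ι 0 v₀) (E.ι 0 (deriv η₀ t)))
      (volume.restrict (Ioc (0:ℝ) T)) := by
    have := hsplit.sub hil
    refine this.congr (Eventually.of_forall fun t => ?_)
    simp only [Pi.sub_apply]
    ring
  rw [integral_add hil hib] at key
  linarith [key]

end AuxAES5
section AuxAES6
open EvolvingGelfand

variable {T : ℝ} {V H : ℝ → Type*}
  [∀ t, NormedAddCommGroup (V t)] [∀ t, InnerProductSpace ℝ (V t)]
  [∀ t, NormedAddCommGroup (H t)] [∀ t, InnerProductSpace ℝ (H t)]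

lemma norm_iota_phi_le (E : EvolvingGelfand T V H) {t : ℝ} (ht : t ∈ Icc (0:ℝ) T)
    (c : V 0) : ‖E.ι t (E.PV.φ t c)‖ ≤ E.PH.C * ‖E.ι 0‖ * ‖c‖ := by
  rw [E.ι_compat]
  calc ‖E.PH.φ t (E.ι 0 c)‖ ≤ E.PH.C * ‖E.ι 0 c‖ := E.PH.norm_map_le t ht _
    _ ≤ E.PH.C * (‖E.ι 0‖ * ‖c‖) :=
        mul_le_mul_of_nonneg_left ((E.ι 0).le_opNorm c) E.PH.C_pos.le
    _ = E.PH.C * ‖E.ι 0‖ * ‖c‖ := by ring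

/-- Measurability of `t ↦ φ_t^* L̇(t) φ_t v₀` for constant `v₀`, via (L7) applied to the
constant-pullback path. -/
lemma aesm_Ldot_phi_const (E : EvolvingGelfand T V H) (LD : LData E) (hT : 0 < T)
    (v₀ : V 0) :
    AEStronglyMeasurable (fun t => E.PV.pullDual t (LD.Ldot t (E.PV.φ t v₀)))
      (volume.restrict (Ioc (0:ℝ) T)) := by
  have h7 := LD.hL7 (fun t => E.PV.φ t v₀) (fun t => (0 : StrongDual ℝ (V t)))
    (memL2X_phi_const E v₀) (memL2Xstar_zero E) (iwmd_phi_const E hT v₀)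
  have hmem := h7.1
  rw [CompatiblePair.MemL2Xstar] at hmem
  have e : (fun t => E.PV.pullDual t (LD.Ldot t (E.PV.φ t v₀)
      + LD.Lstar t (0 : StrongDual ℝ (V t))))
      = fun t => E.PV.pullDual t (LD.Ldot t (E.PV.φ t v₀)) := by
    funext t
    rw [map_zero, add_zero]
  rw [e] at hmem
  exact hmem.aestronglyMeasurable

lemma aesm_Ldot_u (E : EvolvingGelfand T V H) (LD : LData E) (hT : 0 < T)
    {u : ∀ t, V t} (hu : E.PV.MemL2X u) :
    AEStronglyMeasurable (fun t => E.PV.pullDual t (LD.Ldot t (u t)))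
      (volume.restrict (Ioc (0:ℝ) T)) := by
  have hcont : ∀ᵐ t ∂(volume.restrict (Ioc (0:ℝ) T)),
      Continuous (fun c : V 0 => E.PV.pullDual t (LD.Ldot t (E.PV.φ t c))) := by
    filter_upwards [ae_mem_Icc' T, LD.hL8] with t ht h8
    set K := E.PV.C * (LD.C₅ * (E.PH.C * ‖E.ι 0‖)) with hK
    have hK0 : 0 ≤ K := by
      have := E.PV.C_pos.le
      have := LD.C₅_pos.le
      have := E.PH.C_pos.le
      positivity
    have hlip : LipschitzWith K.toNNReal
        (fun c : V 0 => E.PV.pullDual t (LD.Ldot t (E.PV.φ t c))) := by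
      apply LipschitzWith.of_dist_le_mul
      intro c c'
      rw [dist_eq_norm, dist_eq_norm]
      have e : E.PV.pullDual t (LD.Ldot t (E.PV.φ t c))
          - E.PV.pullDual t (LD.Ldot t (E.PV.φ t c'))
          = E.PV.pullDual t (LD.Ldot t (E.PV.φ t (c - c'))) := by
        rw [map_sub, map_sub]
        rfl
      rw [e, Real.coe_toNNReal _ hK0]
      calc ‖E.PV.pullDual t (LD.Ldot t (E.PV.φ t (c - c')))‖
          ≤ E.PV.C * ‖LD.Ldot t (E.PV.φ t (c - c'))‖ := norm_pullDual_le E.PV ht _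
        _ ≤ E.PV.C * (LD.C₅ * ‖E.ι t (E.PV.φ t (c - c'))‖) :=
            mul_le_mul_of_nonneg_left (h8 _) E.PV.C_pos.le
        _ ≤ E.PV.C * (LD.C₅ * (E.PH.C * ‖E.ι 0‖ * ‖c - c'‖)) := by
            refine mul_le_mul_of_nonneg_left
              (mul_le_mul_of_nonneg_left (norm_iota_phi_le E ht _) LD.C₅_pos.le)
              E.PV.C_pos.le
        _ = K * ‖c - c'‖ := by rw [hK]; ring
    exact hlip.continuous
  have := aestronglyMeasurable_comp_family (μ := volume.restrict (Ioc (0:ℝ) T))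
    (g := fun t (c : V 0) => E.PV.pullDual t (LD.Ldot t (E.PV.φ t c)))
    (f := fun t => (E.PV.φ t).symm (u t))
    hu.aestronglyMeasurable
    (fun c => aesm_Ldot_phi_const E LD hT c)
    hcont
  refine this.congr (Eventually.of_forall fun t => ?_)
  simp only [(E.PV.φ t).apply_symm_apply]

lemma memL2Xstar_Ldot_u (E : EvolvingGelfand T V H) (LD : LData E) (hT : 0 < T)
    {u : ∀ t, V t} (hu : E.PV.MemL2X u) :
    E.PV.MemL2Xstar (fun t => LD.Ldot t (u t)) := by
  rw [CompatiblePair.MemL2Xstar]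
  refine MemLp.of_le_mul (c := E.PV.C * (LD.C₅ * (E.PH.C * ‖E.ι 0‖))) hu
    (aesm_Ldot_u E LD hT hu) ?_
  filter_upwards [ae_mem_Icc' T, LD.hL8] with t ht h8
  calc ‖E.PV.pullDual t (LD.Ldot t (u t))‖
      ≤ E.PV.C * ‖LD.Ldot t (u t)‖ := norm_pullDual_le E.PV ht _
    _ ≤ E.PV.C * (LD.C₅ * ‖E.ι t (u t)‖) :=
        mul_le_mul_of_nonneg_left (h8 _) E.PV.C_pos.le
    _ ≤ E.PV.C * (LD.C₅ * (E.PH.C * ‖E.ι 0‖ * ‖(E.PV.φ t).symm (u t)‖)) := by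
        refine mul_le_mul_of_nonneg_left (mul_le_mul_of_nonneg_left ?_ LD.C₅_pos.le)
          E.PV.C_pos.le
        have hb := norm_iota_phi_le E ht ((E.PV.φ t).symm (u t))
        rw [(E.PV.φ t).apply_symm_apply] at hb
        exact hb
    _ = E.PV.C * (LD.C₅ * (E.PH.C * ‖E.ι 0‖)) * ‖(E.PV.φ t).symm (u t)‖ := by ring

end AuxAES6
section AuxAES7

/-- A smooth cutoff equal to `1` on `[δ, T-δ]` and supported in `(0,T)`. -/
lemma exists_cutoff_aes {T : ℝ} (hT : 0 < T) (δ : ℝ) (hδ0 : 0 < δ) (hδT : δ ≤ T / 3) :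
    ∃ χ : ℝ → ℝ, ContDiff ℝ (⊤ : ℕ∞) χ ∧ tsupport χ ⊆ Ioo (0:ℝ) T ∧
      (∀ x, χ x ∈ Icc (0:ℝ) 1) ∧ ∀ x ∈ Icc δ (T - δ), χ x = 1 := by
  have hd : Disjoint ((Ioo (δ/2) (T - δ/2))ᶜ) (Icc δ (T - δ)) := by
    rw [Set.disjoint_compl_left_iff_subset]
    intro x hx
    exact ⟨lt_of_lt_of_le (by linarith) hx.1, lt_of_le_of_lt hx.2 (by linarith)⟩
  obtain ⟨f, hf0, hf1, hf01⟩ := exists_contMDiffMap_zero_one_of_isClosed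
    (modelWithCornersSelf ℝ ℝ) (n := (⊤ : ℕ∞))
    (isOpen_Ioo (a := δ/2) (b := T - δ/2)).isClosed_compl
    isClosed_Icc hd
  have hsmooth : ContDiff ℝ (⊤ : ℕ∞) (f : ℝ → ℝ) := by
    have := f.contMDiff
    rw [contMDiff_iff_contDiff] at this
    exact_mod_cast this
  refine ⟨f, hsmooth, ?_, hf01, fun x hx => hf1 hx⟩
  have hsub : Function.support (f : ℝ → ℝ) ⊆ Ioo (δ/2) (T - δ/2) := by
    intro x hx
    by_contra hmem
    exact hx (hf0 hmem)
  refine (closure_mono hsub).trans ?_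
  rw [closure_Ioo (by intro h; rw [h] at *; linarith : δ/2 ≠ T - δ/2)]
  intro x hx
  exact ⟨lt_of_lt_of_le (by linarith) hx.1, lt_of_le_of_lt hx.2 (by linarith)⟩

/-- du Bois-Reymond: an integrable function orthogonal to all test functions vanishes a.e. -/
lemma duBoisReymond_aes {T : ℝ} (hT : 0 < T) {h : ℝ → ℝ}
    (hint : Integrable h (volume.restrict (Ioc (0:ℝ) T)))
    (hz : ∀ ζ : ℝ → ℝ, ContDiff ℝ (⊤ : ℕ∞) ζ → tsupport ζ ⊆ Ioo (0:ℝ) T →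
      ∫ t in Ioc (0:ℝ) T, ζ t * h t = 0) :
    ∀ᵐ t ∂(volume.restrict (Ioc (0:ℝ) T)), h t = 0 := by
  set f : ℝ → ℝ := (Ioc (0:ℝ) T).indicator h with hf
  have hloc : MeasureTheory.LocallyIntegrableOn f (Ioo (0:ℝ) T) volume := by
    have : Integrable f volume := by
      rw [hf, integrable_indicator_iff measurableSet_Ioc]
      exact hint
    exact this.locallyIntegrable.locallyIntegrableOn _
  have key : ∀ᵐ x ∂(volume : Measure ℝ), x ∈ Ioo (0:ℝ) T → f x = 0 := by
    refine IsOpen.ae_eq_zero_of_integral_contDiff_smul_eq_zero isOpen_Ioo hloc ?_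
    intro ζ hζ hcs hsupp
    have hζ' : ContDiff ℝ (⊤ : ℕ∞) ζ := by exact_mod_cast hζ
    have e : (fun x => ζ x • f x) = (Ioc (0:ℝ) T).indicator (fun x => ζ x * h x) := by
      funext x
      rw [hf]
      by_cases hx : x ∈ Ioc (0:ℝ) T <;>
        simp [Set.indicator_of_mem, Set.indicator_of_notMem, hx, smul_eq_mul]
    rw [e, integral_indicator measurableSet_Ioc]
    exact hz ζ hζ' hsupp
  have key' := ae_restrict_of_ae (μ := volume) (s := Ioc (0:ℝ) T) key
  filter_upwards [key', ae_mem_Ioo' T, ae_restrict_mem measurableSet_Ioc] with t h1 h2 h3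
  have := h1 h2
  rw [hf, Set.indicator_of_mem h3] at this
  exact this

end AuxAES7
section AuxAES8
open EvolvingGelfand

variable {T : ℝ} {V H : ℝ → Type*}
  [∀ t, NormedAddCommGroup (V t)] [∀ t, InnerProductSpace ℝ (V t)]
  [∀ t, NormedAddCommGroup (H t)] [∀ t, InnerProductSpace ℝ (H t)]

lemma hasCompactSupport_of_tsupport_subset {T : ℝ} {ζ : ℝ → ℝ}
    (hsupp : tsupport ζ ⊆ Ioo (0:ℝ) T) : HasCompactSupport ζ := by
  rw [HasCompactSupport]
  exact (isCompact_Icc (a := (0:ℝ)) (b := T)).of_isClosed_subset (isClosed_tsupport ζ)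
    (hsupp.trans Ioo_subset_Icc_self)

/-- The forward direction: if `∂•u = g'` with `Lg' = g` a.e., then the weak identity holds. -/
lemma forward_identity (E : EvolvingGelfand T V H) (LD : LData E) (hT : 0 < T)
    {u : ∀ t, V t} (hu : E.PV.MemL2X u)
    {g g' : ∀ t, StrongDual ℝ (V t)} (hg'mem : E.PV.MemL2Xstar g')
    (hIW : E.IWMD u g')
    (hae : ∀ᵐ t ∂(volume.restrict (Ioc (0:ℝ) T)), LD.Lstar t (g' t) = g t) :
    ∀ v₀ : V 0, ∀ ζ : ℝ → ℝ, ContDiff ℝ (⊤ : ℕ∞) ζ → tsupport ζ ⊆ Ioo (0:ℝ) T →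
      (∫ t in Ioc (0:ℝ) T, deriv ζ t *
          (inner ℝ (E.ι t (LD.LV t (u t))) (E.ι t (E.PV.φ t v₀)) : ℝ))
        = -∫ t in Ioc (0:ℝ) T, ζ t *
            (g t (E.PV.φ t v₀)
              + (LD.Ldot t (u t) (E.PV.φ t v₀)
                + E.lam t (E.ι t (LD.LV t (u t))) (E.ι t (E.PV.φ t v₀)))) := by
  intro v₀ ζ hζ hζsupp
  have h7 := LD.hL7 u g' hu hg'mem hIW
  set G' : ∀ t, StrongDual ℝ (V t) :=
    fun t => LD.Ldot t (u t) + LD.Lstar t (g' t) with hG'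
  have hG'mem : E.PV.MemL2Xstar G' := h7.1
  have hIWL := h7.2
  -- the test function
  have hζd : Differentiable ℝ ζ := hζ.differentiable (by simp)
  set η₀ : ℝ → V 0 := fun t => ζ t • v₀ with hη₀
  have hη : ContDiff ℝ (⊤ : ℕ∞) η₀ := hζ.smul contDiff_const
  have hηsupp : tsupport η₀ ⊆ Ioo (0:ℝ) T := by
    refine subset_trans (closure_mono ?_) hζsupp
    intro t ht
    simp only [Function.mem_support, hη₀] at ht ⊢
    intro h0
    exact ht (by rw [h0, zero_smul])
  have hderiv_η : ∀ t, deriv η₀ t = deriv ζ t • v₀ := fun t =>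
    deriv_smul_const (hζd t) v₀
  obtain ⟨Mζ, hMζ⟩ := hζ.continuous.bounded_above_of_compact_support
    (hasCompactSupport_of_tsupport_subset hζsupp)
  have hηbd : ∀ t, ‖η₀ t‖ ≤ Mζ * ‖v₀‖ := by
    intro t
    rw [hη₀]
    simp only [norm_smul, Real.norm_eq_abs]
    exact mul_le_mul_of_nonneg_right ((Real.norm_eq_abs (ζ t)) ▸ hMζ t) (norm_nonneg _)
  have Eq1 := hIWL η₀ hη hηsupp
  -- pullback of Lu
  set Lubar : ℝ → V 0 := fun t => (E.PV.φ t).symm (LD.LV t (u t)) with hLubar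
  have hLu : E.PV.MemL2X (fun t => LD.LV t (u t)) := LD.hL5 u hu
  have hLubar : MemLp Lubar 2 (volume.restrict (Ioc (0:ℝ) T)) := hLu
  have hLuphi : ∀ t, LD.LV t (u t) = E.PV.φ t (Lubar t) := fun t =>
    ((E.PV.φ t).apply_symm_apply _).symm
  set b : ℝ → ℝ := fun t => betaH E t (E.ι 0 (Lubar t)) (E.ι 0 v₀) with hb
  set lh : ℝ → ℝ := fun t => E.lamHat t (E.ι 0 (Lubar t)) (E.ι 0 v₀) with hlh
  -- Claim B : inner integrand rewrite
  have hB : ∀ t, (inner ℝ (E.ι t (LD.LV t (u t))) (E.ι t (E.PV.φ t (deriv η₀ t))) : ℝ)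
      = deriv ζ t * b t := by
    intro t
    rw [hLuphi t, hderiv_η t, inner_iota_eq E t, (E.ι 0).map_smul, betaH_smul_right]
  have hBgoal : ∀ t, (inner ℝ (E.ι t (LD.LV t (u t))) (E.ι t (E.PV.φ t v₀)) : ℝ) = b t := by
    intro t
    rw [hLuphi t, inner_iota_eq E t]
  have hCgoal : ∀ t, E.lam t (E.ι t (LD.LV t (u t))) (E.ι t (E.PV.φ t v₀)) = lh t := by
    intro t
    rw [hLuphi t, lam_iota_eq E t]
  -- pointwise identities
  have hptA : ∀ᵐ t ∂(volume.restrict (Ioc (0:ℝ) T)), G' t (E.PV.φ t (η₀ t))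
      = ζ t * (LD.Ldot t (u t) (E.PV.φ t v₀) + g t (E.PV.φ t v₀)) := by
    filter_upwards [hae] with t ht
    have e1 : (E.PV.φ t) (ζ t • v₀) = ζ t • (E.PV.φ t v₀) := (E.PV.φ t).map_smul _ _
    show G' t (E.PV.φ t (ζ t • v₀)) = _
    rw [e1, (G' t).map_smul, smul_eq_mul]
    show ζ t * (LD.Ldot t (u t) (E.PV.φ t v₀) + LD.Lstar t (g' t) (E.PV.φ t v₀)) = _
    rw [ht]
  have hptC : ∀ᵐ t ∂(volume.restrict (Ioc (0:ℝ) T)),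
      E.lam t (E.ι t (LD.LV t (u t))) (E.ι t (E.PV.φ t (η₀ t))) = ζ t * lh t := by
    filter_upwards [ae_mem_Icc' T] with t ht
    show E.lam t (E.ι t (LD.LV t (u t))) (E.ι t (E.PV.φ t (ζ t • v₀))) = ζ t * lh t
    rw [hLuphi t, lam_iota_eq E t, (E.ι 0).map_smul, lamHat_smul_right E hT ht]
  -- rewrite Eq1
  have EqA : (∫ t in Ioc (0:ℝ) T, G' t (E.PV.φ t (η₀ t)))
      = ∫ t in Ioc (0:ℝ) T, ζ t * (LD.Ldot t (u t) (E.PV.φ t v₀) + g t (E.PV.φ t v₀)) :=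
    integral_congr_ae hptA
  have EqB : (∫ t in Ioc (0:ℝ) T,
        (inner ℝ (E.ι t (LD.LV t (u t))) (E.ι t (E.PV.φ t (deriv η₀ t))) : ℝ))
      = ∫ t in Ioc (0:ℝ) T, deriv ζ t * b t :=
    integral_congr_ae (Eventually.of_forall fun t => hB t)
  have EqC : (∫ t in Ioc (0:ℝ) T,
        E.lam t (E.ι t (LD.LV t (u t))) (E.ι t (E.PV.φ t (η₀ t))))
      = ∫ t in Ioc (0:ℝ) T, ζ t * lh t := integral_congr_ae hptC
  rw [EqA, EqB, EqC] at Eq1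
  -- integrability
  have hi1 : Integrable (fun t => ζ t * (LD.Ldot t (u t) (E.PV.φ t v₀) + g t (E.PV.φ t v₀)))
      (volume.restrict (Ioc (0:ℝ) T)) :=
    (integrable_dual_eval E hG'mem (w := η₀) (hη.continuous.aestronglyMeasurable)
      hηbd).congr hptA
  have hptC2 : ∀ᵐ t ∂(volume.restrict (Ioc (0:ℝ) T)),
      E.lamHat t (E.ι 0 (Lubar t)) (E.ι 0 (η₀ t)) = ζ t * lh t := by
    filter_upwards [ae_mem_Icc' T] with t ht
    show E.lamHat t (E.ι 0 (Lubar t)) (E.ι 0 (ζ t • v₀)) = ζ t * lh t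
    rw [(E.ι 0).map_smul, lamHat_smul_right E hT ht]
  have hi2 : Integrable (fun t => ζ t * lh t) (volume.restrict (Ioc (0:ℝ) T)) :=
    (integrable_lamHat E hT hLubar (w := η₀) (hη.continuous.aestronglyMeasurable)
      hηbd).congr hptC2
  -- final rearrangement
  have goalB : (∫ t in Ioc (0:ℝ) T, deriv ζ t *
      (inner ℝ (E.ι t (LD.LV t (u t))) (E.ι t (E.PV.φ t v₀)) : ℝ))
      = ∫ t in Ioc (0:ℝ) T, deriv ζ t * b t :=
    integral_congr_ae (Eventually.of_forall fun t =>
      congrArg (fun z => deriv ζ t * z) (hBgoal t))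
  have goalC : (∫ t in Ioc (0:ℝ) T, ζ t *
      (g t (E.PV.φ t v₀) + (LD.Ldot t (u t) (E.PV.φ t v₀)
        + E.lam t (E.ι t (LD.LV t (u t))) (E.ι t (E.PV.φ t v₀)))))
      = (∫ t in Ioc (0:ℝ) T, ζ t * (LD.Ldot t (u t) (E.PV.φ t v₀) + g t (E.PV.φ t v₀)))
        + ∫ t in Ioc (0:ℝ) T, ζ t * lh t := by
    rw [← integral_add hi1 hi2]
    refine integral_congr_ae (Eventually.of_forall fun t => ?_)
    show ζ t * (g t (E.PV.φ t v₀) + (LD.Ldot t (u t) (E.PV.φ t v₀)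
        + E.lam t (E.ι t (LD.LV t (u t))) (E.ι t (E.PV.φ t v₀))))
      = ζ t * (LD.Ldot t (u t) (E.PV.φ t v₀) + g t (E.PV.φ t v₀)) + ζ t * lh t
    rw [hCgoal t]
    ring
  rw [goalB, goalC]
  linarith [Eq1]

end AuxAES8
section AuxAES9

variable {E₀ : Type*} [NormedAddCommGroup E₀] [InnerProductSpace ℝ E₀] [CompleteSpace E₀]

lemma norm_orthogonalProjection_apply_le (K : Submodule ℝ E₀) [K.HasOrthogonalProjection]
    (x : E₀) : ‖(K.orthogonalProjectionOnto x : E₀)‖ ≤ ‖x‖ := by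
  have h := (K.orthogonalProjectionOnto).le_opNorm x
  calc ‖(K.orthogonalProjectionOnto x : E₀)‖ = ‖K.orthogonalProjectionOnto x‖ := rfl
    _ ≤ ‖K.orthogonalProjectionOnto‖ * ‖x‖ := h
    _ ≤ 1 * ‖x‖ := mul_le_mul_of_nonneg_right (Submodule.orthogonalProjectionOnto_norm_le K) (norm_nonneg _)
    _ = ‖x‖ := one_mul _

lemma norm_sub_orthogonalProjection_le (K : Submodule ℝ E₀) [K.HasOrthogonalProjection]
    (x : E₀) (y : E₀) (hy : y ∈ K) :
    ‖x - (K.orthogonalProjectionOnto x : E₀)‖ ≤ ‖x - y‖ := by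
  rw [← Submodule.starProjection_apply, Submodule.starProjection_minimal]
  refine ciInf_le_of_le ⟨0, fun b hb => ?_⟩ (⟨y, hy⟩ : K) le_rfl
  obtain ⟨z, rfl⟩ := hb
  exact norm_nonneg _

/-- Projections onto the spans of the first `n` terms of a dense sequence converge pointwise. -/
lemma tendsto_span_orthogonalProjection {d : ℕ → E₀} (hd : DenseRange d) (x : E₀)
    {U : ℕ → Submodule ℝ E₀} (hU : ∀ n, ∀ k < n, d k ∈ U n)
    [∀ n, (U n).HasOrthogonalProjection] :
    Filter.Tendsto (fun n => ((U n).orthogonalProjectionOnto x : E₀)) Filter.atTop (𝓝 x) := by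
  rw [Metric.tendsto_atTop]
  intro ε hε
  obtain ⟨k, hk⟩ := hd.exists_dist_lt x hε
  refine ⟨k + 1, fun n hn => ?_⟩
  have hmem : d k ∈ U n := hU n k (lt_of_lt_of_le (Nat.lt_succ_self k) hn)
  have h1 : ‖x - ((U n).orthogonalProjectionOnto x : E₀)‖ ≤ ‖x - d k‖ :=
    norm_sub_orthogonalProjection_le (U n) x (d k) hmem
  rw [dist_comm, dist_eq_norm]
  calc ‖x - ((U n).orthogonalProjectionOnto x : E₀)‖ ≤ ‖x - d k‖ := h1
    _ = dist x (d k) := (dist_eq_norm _ _).symm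
    _ < ε := hk

end AuxAES9
section AuxAES10
open EvolvingGelfand

variable {T : ℝ} {V H : ℝ → Type*}
  [∀ t, NormedAddCommGroup (V t)] [∀ t, InnerProductSpace ℝ (V t)]
  [∀ t, NormedAddCommGroup (H t)] [∀ t, InnerProductSpace ℝ (H t)]

lemma betaH_zero_right (E : EvolvingGelfand T V H) (t : ℝ) (x : H 0) :
    betaH E t x 0 = 0 := by simp [betaH]

lemma lamHat_zero_right (E : EvolvingGelfand T V H) (hT : 0 < T) {t : ℝ}
    (ht : t ∈ Icc (0:ℝ) T) (x : H 0) : E.lamHat t x 0 = 0 := by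
  have := lamHat_smul_right E hT ht x 0 0
  simpa using this

lemma betaH_sum_right (E : EvolvingGelfand T V H) (t : ℝ) (x : H 0)
    {ι : Type*} (s : Finset ι) (y : ι → H 0) :
    betaH E t x (∑ j ∈ s, y j) = ∑ j ∈ s, betaH E t x (y j) := by
  classical
  induction s using Finset.cons_induction with
  | empty => simp [betaH]
  | cons j s hj ih => rw [Finset.sum_cons, betaH_add_right, ih, Finset.sum_cons]

lemma lamHat_sum_right (E : EvolvingGelfand T V H) (hT : 0 < T) {t : ℝ}
    (ht : t ∈ Icc (0:ℝ) T) (x : H 0) {ι : Type*} (s : Finset ι) (y : ι → H 0) :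
    E.lamHat t x (∑ j ∈ s, y j) = ∑ j ∈ s, E.lamHat t x (y j) := by
  classical
  induction s using Finset.cons_induction with
  | empty => simpa using lamHat_zero_right E hT ht x
  | cons j s hj ih => rw [Finset.sum_cons, lamHat_add_right E hT ht, ih, Finset.sum_cons]

/-- The combined integrand in the backward direction. -/
def ItgF (E : EvolvingGelfand T V H) (LD : LData E) (u : ∀ t, V t)
    (g : ∀ t, StrongDual ℝ (V t)) (w wd : ℝ → V 0) (t : ℝ) : ℝ :=
  (LD.Ldot t (u t) + g t) (E.PV.φ t (w t))
    + (betaH E t (E.ι 0 ((E.PV.φ t).symm (LD.LV t (u t)))) (E.ι 0 (wd t))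
      + E.lamHat t (E.ι 0 ((E.PV.φ t).symm (LD.LV t (u t)))) (E.ι 0 (w t)))

lemma integrable_ItgF (E : EvolvingGelfand T V H) (LD : LData E) (hT : 0 < T)
    {u : ∀ t, V t} (hu : E.PV.MemL2X u)
    {g : ∀ t, StrongDual ℝ (V t)}
    (hGmem : E.PV.MemL2Xstar (fun t => LD.Ldot t (u t) + g t))
    {w wd : ℝ → V 0}
    (hw : AEStronglyMeasurable w (volume.restrict (Ioc (0:ℝ) T)))
    (hwd : AEStronglyMeasurable wd (volume.restrict (Ioc (0:ℝ) T)))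
    {Mw Mwd : ℝ} (hMw : ∀ t, ‖w t‖ ≤ Mw) (hMwd : ∀ t, ‖wd t‖ ≤ Mwd) :
    Integrable (ItgF E LD u g w wd) (volume.restrict (Ioc (0:ℝ) T)) := by
  have hLubar : MemLp (fun t => (E.PV.φ t).symm (LD.LV t (u t))) 2
      (volume.restrict (Ioc (0:ℝ) T)) := LD.hL5 u hu
  exact (integrable_dual_eval E hGmem hw hMw).add
    ((integrable_betaH E hLubar hwd hMwd).add (integrable_lamHat E hT hLubar hw hMw))

/-- The product-test-function case of the combined identity, from the hypothesis `hR`. -/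
lemma backward_prod (E : EvolvingGelfand T V H) (LD : LData E) (hT : 0 < T)
    {u : ∀ t, V t} (hu : E.PV.MemL2X u)
    {g : ∀ t, StrongDual ℝ (V t)} (hg : E.PV.MemL2Xstar g)
    (hGmem : E.PV.MemL2Xstar (fun t => LD.Ldot t (u t) + g t))
    (hR : ∀ v₀ : V 0, ∀ ζ : ℝ → ℝ, ContDiff ℝ (⊤ : ℕ∞) ζ → tsupport ζ ⊆ Ioo (0:ℝ) T →
      (∫ t in Ioc (0:ℝ) T, deriv ζ t *
          (inner ℝ (E.ι t (LD.LV t (u t))) (E.ι t (E.PV.φ t v₀)) : ℝ))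
        = -∫ t in Ioc (0:ℝ) T, ζ t *
            (g t (E.PV.φ t v₀)
              + (LD.Ldot t (u t) (E.PV.φ t v₀)
                + E.lam t (E.ι t (LD.LV t (u t))) (E.ι t (E.PV.φ t v₀)))))
    (v₀ : V 0) (ζ : ℝ → ℝ) (hζ : ContDiff ℝ (⊤ : ℕ∞) ζ)
    (hζsupp : tsupport ζ ⊆ Ioo (0:ℝ) T) :
    ∫ t in Ioc (0:ℝ) T,
      ItgF E LD u g (fun t => ζ t • v₀) (fun t => deriv ζ t • v₀) t = 0 := by
  set Lubar : ℝ → V 0 := fun t => (E.PV.φ t).symm (LD.LV t (u t)) with hLubardef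
  have hLubar : MemLp Lubar 2 (volume.restrict (Ioc (0:ℝ) T)) := LD.hL5 u hu
  have hLuphi : ∀ t, LD.LV t (u t) = E.PV.φ t (Lubar t) := fun t =>
    ((E.PV.φ t).apply_symm_apply _).symm
  set b : ℝ → ℝ := fun t => betaH E t (E.ι 0 (Lubar t)) (E.ι 0 v₀) with hbdef
  set lh : ℝ → ℝ := fun t => E.lamHat t (E.ι 0 (Lubar t)) (E.ι 0 v₀) with hlhdef
  set p1 : ℝ → ℝ := fun t => ζ t * (LD.Ldot t (u t) (E.PV.φ t v₀) + g t (E.PV.φ t v₀))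
    with hp1def
  set p2 : ℝ → ℝ := fun t => deriv ζ t * b t with hp2def
  set p3 : ℝ → ℝ := fun t => ζ t * lh t with hp3def
  -- bounds on the test functions
  have hζd : Differentiable ℝ ζ := hζ.differentiable (by simp)
  obtain ⟨Mζ, hMζ⟩ := hζ.continuous.bounded_above_of_compact_support
    (hasCompactSupport_of_tsupport_subset hζsupp)
  obtain ⟨Mζ', hMζ'⟩ := (hζ.continuous_deriv (by exact_mod_cast le_top
    : (1:WithTop ℕ∞) ≤ _)).bounded_above_of_compact_support
    ((hasCompactSupport_of_tsupport_subset hζsupp).deriv)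
  have hwbd : ∀ t, ‖ζ t • v₀‖ ≤ Mζ * ‖v₀‖ := fun t => by
    rw [norm_smul]
    exact mul_le_mul_of_nonneg_right (hMζ t) (norm_nonneg _)
  have hwdbd : ∀ t, ‖deriv ζ t • v₀‖ ≤ Mζ' * ‖v₀‖ := fun t => by
    rw [norm_smul]
    exact mul_le_mul_of_nonneg_right (hMζ' t) (norm_nonneg _)
  have hwm : AEStronglyMeasurable (fun t => ζ t • v₀) (volume.restrict (Ioc (0:ℝ) T)) :=
    (hζ.continuous.smul continuous_const).aestronglyMeasurable
  have hwdm : AEStronglyMeasurable (fun t => deriv ζ t • v₀)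
      (volume.restrict (Ioc (0:ℝ) T)) :=
    ((hζ.continuous_deriv (by exact_mod_cast le_top)).smul
      continuous_const).aestronglyMeasurable
  -- pointwise identities
  have hpt1 : ∀ t, (LD.Ldot t (u t) + g t) (E.PV.φ t (ζ t • v₀)) = p1 t := by
    intro t
    rw [(E.PV.φ t).map_smul, (LD.Ldot t (u t) + g t).map_smul, smul_eq_mul]
    rfl
  have hpt2 : ∀ t, betaH E t (E.ι 0 (Lubar t)) (E.ι 0 (deriv ζ t • v₀)) = p2 t := by
    intro t
    rw [(E.ι 0).map_smul, betaH_smul_right]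
  have hpt3 : ∀ᵐ t ∂(volume.restrict (Ioc (0:ℝ) T)),
      E.lamHat t (E.ι 0 (Lubar t)) (E.ι 0 (ζ t • v₀)) = p3 t := by
    filter_upwards [ae_mem_Icc' T] with t ht
    rw [(E.ι 0).map_smul, lamHat_smul_right E hT ht]
  -- integrability of the pieces
  have hi1 : Integrable p1 (volume.restrict (Ioc (0:ℝ) T)) :=
    (integrable_dual_eval E hGmem hwm hwbd).congr (Eventually.of_forall hpt1)
  have hi2 : Integrable p2 (volume.restrict (Ioc (0:ℝ) T)) :=
    (integrable_betaH E hLubar hwdm hwdbd).congr (Eventually.of_forall hpt2)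
  have hi3 : Integrable p3 (volume.restrict (Ioc (0:ℝ) T)) :=
    (integrable_lamHat E hT hLubar hwm hwbd).congr hpt3
  -- use hR
  have hmain := hR v₀ ζ hζ hζsupp
  have hL : (∫ t in Ioc (0:ℝ) T, deriv ζ t *
      (inner ℝ (E.ι t (LD.LV t (u t))) (E.ι t (E.PV.φ t v₀)) : ℝ))
      = ∫ t in Ioc (0:ℝ) T, p2 t := by
    refine integral_congr_ae (Eventually.of_forall fun t => ?_)
    have : (inner ℝ (E.ι t (LD.LV t (u t))) (E.ι t (E.PV.φ t v₀)) : ℝ) = b t := by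
      rw [hLuphi t, inner_iota_eq E t]
    exact congrArg (fun z => deriv ζ t * z) this
  have hRr : (∫ t in Ioc (0:ℝ) T, ζ t *
      (g t (E.PV.φ t v₀) + (LD.Ldot t (u t) (E.PV.φ t v₀)
        + E.lam t (E.ι t (LD.LV t (u t))) (E.ι t (E.PV.φ t v₀)))))
      = (∫ t in Ioc (0:ℝ) T, p1 t) + ∫ t in Ioc (0:ℝ) T, p3 t := by
    rw [← integral_add hi1 hi3]
    refine integral_congr_ae (Eventually.of_forall fun t => ?_)
    show ζ t * (g t (E.PV.φ t v₀) + (LD.Ldot t (u t) (E.PV.φ t v₀)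
        + E.lam t (E.ι t (LD.LV t (u t))) (E.ι t (E.PV.φ t v₀)))) = p1 t + p3 t
    have : E.lam t (E.ι t (LD.LV t (u t))) (E.ι t (E.PV.φ t v₀)) = lh t := by
      rw [hLuphi t, lam_iota_eq E t]
    rw [this, hp1def, hp3def]
    ring
  rw [hL, hRr] at hmain
  -- assemble
  have hsplit : (∫ t in Ioc (0:ℝ) T,
      ItgF E LD u g (fun t => ζ t • v₀) (fun t => deriv ζ t • v₀) t)
      = (∫ t in Ioc (0:ℝ) T, p1 t) + ((∫ t in Ioc (0:ℝ) T, p2 t)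
        + ∫ t in Ioc (0:ℝ) T, p3 t) := by
    have e0 : (∫ t in Ioc (0:ℝ) T,
        ItgF E LD u g (fun t => ζ t • v₀) (fun t => deriv ζ t • v₀) t)
        = ∫ t in Ioc (0:ℝ) T, (p1 t + (p2 t + p3 t)) := by
      refine integral_congr_ae ?_
      filter_upwards [hpt3] with t h3
      show ItgF E LD u g (fun t => ζ t • v₀) (fun t => deriv ζ t • v₀) t
        = p1 t + (p2 t + p3 t)
      rw [ItgF, hpt1 t, hpt2 t, h3]
    have hi23 : Integrable (fun t => p2 t + p3 t) (volume.restrict (Ioc (0:ℝ) T)) :=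
      hi2.add hi3
    rw [e0, integral_add hi1 hi23, integral_add hi2 hi3]
  rw [hsplit]
  linarith [hmain]

end AuxAES10
section AuxAES11
open EvolvingGelfand

variable {T : ℝ} {V H : ℝ → Type*}
  [∀ t, NormedAddCommGroup (V t)] [∀ t, InnerProductSpace ℝ (V t)]
  [∀ t, NormedAddCommGroup (H t)] [∀ t, InnerProductSpace ℝ (H t)]

lemma memL2Xstar_add (E : EvolvingGelfand T V H)
    {f1 f2 : ∀ t, StrongDual ℝ (V t)}
    (h1 : E.PV.MemL2Xstar f1) (h2 : E.PV.MemL2Xstar f2) :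
    E.PV.MemL2Xstar (fun t => f1 t + f2 t) := by
  rw [CompatiblePair.MemL2Xstar]
  have e : (fun t => E.PV.pullDual t (f1 t + f2 t))
      = fun t => E.PV.pullDual t (f1 t) + E.PV.pullDual t (f2 t) := by
    funext t
    exact ContinuousLinearMap.add_comp _ _ _
  rw [e]
  exact MemLp.add (f := fun t => E.PV.pullDual t (f1 t)) (g := fun t => E.PV.pullDual t (f2 t)) h1 h2

lemma backward_sum (E : EvolvingGelfand T V H) (LD : LData E) (hT : 0 < T)
    {u : ∀ t, V t} (hu : E.PV.MemL2X u)
    {g : ∀ t, StrongDual ℝ (V t)} (hg : E.PV.MemL2Xstar g)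
    (hGmem : E.PV.MemL2Xstar (fun t => LD.Ldot t (u t) + g t))
    (hR : ∀ v₀ : V 0, ∀ ζ : ℝ → ℝ, ContDiff ℝ (⊤ : ℕ∞) ζ → tsupport ζ ⊆ Ioo (0:ℝ) T →
      (∫ t in Ioc (0:ℝ) T, deriv ζ t *
          (inner ℝ (E.ι t (LD.LV t (u t))) (E.ι t (E.PV.φ t v₀)) : ℝ))
        = -∫ t in Ioc (0:ℝ) T, ζ t *
            (g t (E.PV.φ t v₀)
              + (LD.Ldot t (u t) (E.PV.φ t v₀)
                + E.lam t (E.ι t (LD.LV t (u t))) (E.ι t (E.PV.φ t v₀)))))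
    {ι : Type*} (s : Finset ι) (ζi : ι → ℝ → ℝ) (vi : ι → V 0)
    (hζc : ∀ j ∈ s, ContDiff ℝ (⊤ : ℕ∞) (ζi j))
    (hζs : ∀ j ∈ s, tsupport (ζi j) ⊆ Ioo (0:ℝ) T) :
    ∫ t in Ioc (0:ℝ) T, ItgF E LD u g (fun t => ∑ j ∈ s, ζi j t • vi j)
      (fun t => ∑ j ∈ s, deriv (ζi j) t • vi j) t = 0 := by
  classical
  have hIntj : ∀ j ∈ s, Integrable
      (fun t => ItgF E LD u g (fun t => ζi j t • vi j) (fun t => deriv (ζi j) t • vi j) t)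
      (volume.restrict (Ioc (0:ℝ) T)) := by
    intro j hj
    obtain ⟨Mζ, hMζ⟩ := (hζc j hj).continuous.bounded_above_of_compact_support
      (hasCompactSupport_of_tsupport_subset (hζs j hj))
    obtain ⟨Mζ', hMζ'⟩ := ((hζc j hj).continuous_deriv
      (by exact_mod_cast le_top)).bounded_above_of_compact_support
      ((hasCompactSupport_of_tsupport_subset (hζs j hj)).deriv)
    refine integrable_ItgF E LD hT hu hGmem
      (((hζc j hj).continuous.smul continuous_const).aestronglyMeasurable)
      ((((hζc j hj).continuous_deriv (by exact_mod_cast le_top)).smul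
        continuous_const).aestronglyMeasurable)
      (Mw := Mζ * ‖vi j‖) (Mwd := Mζ' * ‖vi j‖) ?_ ?_
    · intro t
      rw [norm_smul]
      exact mul_le_mul_of_nonneg_right (hMζ t) (norm_nonneg _)
    · intro t
      rw [norm_smul]
      exact mul_le_mul_of_nonneg_right (hMζ' t) (norm_nonneg _)
  have hpt : ∀ᵐ t ∂(volume.restrict (Ioc (0:ℝ) T)),
      ItgF E LD u g (fun t => ∑ j ∈ s, ζi j t • vi j)
        (fun t => ∑ j ∈ s, deriv (ζi j) t • vi j) t
      = ∑ j ∈ s, ItgF E LD u g (fun t => ζi j t • vi j)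
          (fun t => deriv (ζi j) t • vi j) t := by
    filter_upwards [ae_mem_Icc' T] with t ht
    rw [ItgF]
    rw [_root_.map_sum (E.PV.φ t) _ s, _root_.map_sum (LD.Ldot t (u t) + g t) _ s,
      _root_.map_sum (E.ι 0) (fun j => deriv (ζi j) t • vi j) s,
      _root_.map_sum (E.ι 0) (fun j => ζi j t • vi j) s,
      betaH_sum_right, lamHat_sum_right E hT ht, ← Finset.sum_add_distrib,
      ← Finset.sum_add_distrib]
    rfl
  rw [integral_congr_ae hpt, integral_finset_sum s hIntj]
  refine Finset.sum_eq_zero fun j hj => ?_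
  exact backward_prod E LD hT hu hg hGmem hR (vi j) (ζi j) (hζc j hj) (hζs j hj)

end AuxAES11
section AuxAES12

variable {E₀ : Type*} [NormedAddCommGroup E₀] [InnerProductSpace ℝ E₀]

lemma exists_projection_approx (E₀ : Type*) [NormedAddCommGroup E₀]
    [InnerProductSpace ℝ E₀] [CompleteSpace E₀] [TopologicalSpace.SeparableSpace E₀] :
    ∃ P : ℕ → (E₀ →L[ℝ] E₀),
      (∀ n x, ‖P n x‖ ≤ ‖x‖) ∧
      (∀ x, Filter.Tendsto (fun n => P n x) Filter.atTop (𝓝 x)) ∧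
      (∀ n, ∃ (N : ℕ) (e : Fin N → E₀), ∀ x, P n x = ∑ j, (inner ℝ (e j) x : ℝ) • e j) := by
  classical
  haveI : Nonempty E₀ := ⟨0⟩
  obtain ⟨d, hd⟩ := TopologicalSpace.exists_dense_seq E₀
  set U : ℕ → Submodule ℝ E₀ := fun n => Submodule.span ℝ (d '' {i | i < n}) with hUdef
  have hfin : ∀ n, FiniteDimensional ℝ (U n) := fun n =>
    FiniteDimensional.span_of_finite ℝ ((Set.finite_Iio n).image d)
  haveI hOP : ∀ n, (U n).HasOrthogonalProjection := fun n => by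
    haveI := hfin n
    infer_instance
  refine ⟨fun n => letI := hOP n; (U n).subtypeL.comp ((U n).orthogonalProjectionOnto),
    ?_, ?_, ?_⟩
  · intro n x
    letI := hOP n
    exact norm_orthogonalProjection_apply_le (U n) x
  · intro x
    letI := fun n => hOP n
    have hU : ∀ n, ∀ k < n, d k ∈ U n := fun n k hk =>
      Submodule.subset_span ⟨k, hk, rfl⟩
    exact tendsto_span_orthogonalProjection hd x hU
  · intro n
    letI := hfin n
    letI := hOP n
    set bnb := stdOrthonormalBasis ℝ (U n) with hbnb
    refine ⟨Module.finrank ℝ (U n), fun j => (bnb j : E₀), fun x => ?_⟩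
    show (((U n).orthogonalProjectionOnto x : U n) : E₀) = _
    rw [bnb.orthogonalProjectionOnto_apply_eq_sum x]
    push_cast
    rfl

end AuxAES12
section AuxAES13
open EvolvingGelfand

variable {T : ℝ} {V H : ℝ → Type*}
  [∀ t, NormedAddCommGroup (V t)] [∀ t, InnerProductSpace ℝ (V t)]
  [∀ t, NormedAddCommGroup (H t)] [∀ t, InnerProductSpace ℝ (H t)]

lemma hasCompactSupport_of_tsupport_subset' {T : ℝ} {α : Type*} [Zero α] {f : ℝ → α}
    (hsupp : tsupport f ⊆ Ioo (0:ℝ) T) : HasCompactSupport f := by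
  rw [HasCompactSupport]
  exact (isCompact_Icc (a := (0:ℝ)) (b := T)).of_isClosed_subset (isClosed_tsupport f)
    (hsupp.trans Ioo_subset_Icc_self)

lemma backward_iwmd (E : EvolvingGelfand T V H) (LD : LData E) (hT : 0 < T)
    [CompleteSpace (V 0)] [TopologicalSpace.SeparableSpace (V 0)]
    {u : ∀ t, V t} (hu : E.PV.MemL2X u)
    {g : ∀ t, StrongDual ℝ (V t)} (hg : E.PV.MemL2Xstar g)
    (hGmem : E.PV.MemL2Xstar (fun t => LD.Ldot t (u t) + g t))
    (hR : ∀ v₀ : V 0, ∀ ζ : ℝ → ℝ, ContDiff ℝ (⊤ : ℕ∞) ζ → tsupport ζ ⊆ Ioo (0:ℝ) T →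
      (∫ t in Ioc (0:ℝ) T, deriv ζ t *
          (inner ℝ (E.ι t (LD.LV t (u t))) (E.ι t (E.PV.φ t v₀)) : ℝ))
        = -∫ t in Ioc (0:ℝ) T, ζ t *
            (g t (E.PV.φ t v₀)
              + (LD.Ldot t (u t) (E.PV.φ t v₀)
                + E.lam t (E.ι t (LD.LV t (u t))) (E.ι t (E.PV.φ t v₀))))) :
    E.IWMD (fun t => LD.LV t (u t)) (fun t => LD.Ldot t (u t) + g t) := by
  classical
  intro η₀ hη hηsupp
  obtain ⟨P, hPnorm, hPtend, hPrep⟩ := exists_projection_approx (V 0)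
  set Lubar : ℝ → V 0 := fun t => (E.PV.φ t).symm (LD.LV t (u t)) with hLubardef
  have hLubar : MemLp Lubar 2 (volume.restrict (Ioc (0:ℝ) T)) := LD.hL5 u hu
  have hLuphi : ∀ t, LD.LV t (u t) = E.PV.φ t (Lubar t) := fun t =>
    ((E.PV.φ t).apply_symm_apply _).symm
  have hdiff : Differentiable ℝ η₀ := hη.differentiable (by simp)
  have hηcont : Continuous η₀ := hdiff.continuous
  have hηdcont : Continuous (deriv η₀) := hη.continuous_deriv (by exact_mod_cast le_top)
  obtain ⟨Mη, hMη⟩ := hηcont.bounded_above_of_compact_support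
    (hasCompactSupport_of_tsupport_subset' (T := T) hηsupp)
  obtain ⟨Mη', hMη'⟩ := hηdcont.bounded_above_of_compact_support
    ((hasCompactSupport_of_tsupport_subset' (T := T) hηsupp).deriv)
  -- the approximating integrals vanish
  have Hn : ∀ n, ∫ t in Ioc (0:ℝ) T,
      ItgF E LD u g (fun t => P n (η₀ t)) (fun t => P n (deriv η₀ t)) t = 0 := by
    intro n
    obtain ⟨N, e, hrep⟩ := hPrep n
    have hζc : ∀ j ∈ (Finset.univ : Finset (Fin N)),
        ContDiff ℝ (⊤ : ℕ∞) (fun t => (inner ℝ (e j) (η₀ t) : ℝ)) := fun j _ =>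
      ContDiff.inner ℝ contDiff_const hη
    have hζs : ∀ j ∈ (Finset.univ : Finset (Fin N)),
        tsupport (fun t => (inner ℝ (e j) (η₀ t) : ℝ)) ⊆ Ioo (0:ℝ) T := by
      intro j _
      refine subset_trans (closure_mono ?_) hηsupp
      intro t ht
      simp only [Function.mem_support] at ht ⊢
      intro h0
      exact ht (by rw [h0, inner_zero_right])
    have hderivζ : ∀ j t, deriv (fun t => (inner ℝ (e j) (η₀ t) : ℝ)) t
        = (inner ℝ (e j) (deriv η₀ t) : ℝ) := by
      intro j t
      have h := (HasDerivAt.inner ℝ (hasDerivAt_const t (e j)) (hdiff t).hasDerivAt)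
      simpa using h.deriv
    have key := backward_sum E LD hT hu hg hGmem hR (Finset.univ : Finset (Fin N))
      (fun j => fun t => (inner ℝ (e j) (η₀ t) : ℝ)) e hζc hζs
    have ew : (fun t => ∑ j ∈ (Finset.univ : Finset (Fin N)),
        (inner ℝ (e j) (η₀ t) : ℝ) • e j) = fun t => P n (η₀ t) := by
      funext t
      exact (hrep (η₀ t)).symm
    have ewd : (fun t => ∑ j ∈ (Finset.univ : Finset (Fin N)),
        deriv (fun t => (inner ℝ (e j) (η₀ t) : ℝ)) t • e j) = fun t => P n (deriv η₀ t) := by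
      funext t
      rw [show (fun j => deriv (fun t => (inner ℝ (e j) (η₀ t) : ℝ)) t • e j)
          = fun j => (inner ℝ (e j) (deriv η₀ t) : ℝ) • e j from
        funext fun j => by rw [hderivζ j t]]
      exact (hrep (deriv η₀ t)).symm
    rw [ew, ewd] at key
    exact key
  -- dominated convergence
  haveI := isFiniteRestrictIoc T
  set K1 : ℝ := E.PH.C * E.PH.C * ‖E.ι 0‖ * ‖E.ι 0‖ * Mη' with hK1
  set K2 : ℝ := |E.Cθ| / 4 * ‖E.ι 0‖ * ‖E.ι 0‖ * Mη with hK2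
  set bound : ℝ → ℝ := fun t =>
    Mη * ‖E.PV.pullDual t (LD.Ldot t (u t) + g t)‖
      + (K1 * ‖Lubar t‖ + K2 * ‖Lubar t‖) with hbound
  have hMη0 : 0 ≤ Mη := (norm_nonneg _).trans (hMη 0)
  have hMη'0 : 0 ≤ Mη' := (norm_nonneg _).trans (hMη' 0)
  have hboundint : Integrable bound (volume.restrict (Ioc (0:ℝ) T)) := by
    refine ((hGmem.norm.integrable one_le_two).const_mul Mη).add
      (((hLubar.norm.integrable one_le_two).const_mul K1).add
        ((hLubar.norm.integrable one_le_two).const_mul K2))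
  -- pointwise bound valid for any vectors with the right norm bounds
  have habs : ∀ t ∈ Icc (0:ℝ) T, ∀ w wd : V 0, ‖w‖ ≤ Mη → ‖wd‖ ≤ Mη' →
      |(LD.Ldot t (u t) + g t) (E.PV.φ t w)
        + (betaH E t (E.ι 0 (Lubar t)) (E.ι 0 wd)
          + E.lamHat t (E.ι 0 (Lubar t)) (E.ι 0 w))| ≤ bound t := by
    intro t ht w wd hw hwd
    have h1 : |(LD.Ldot t (u t) + g t) (E.PV.φ t w)|
        ≤ Mη * ‖E.PV.pullDual t (LD.Ldot t (u t) + g t)‖ := by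
      have e : (LD.Ldot t (u t) + g t) (E.PV.φ t w)
          = (E.PV.pullDual t (LD.Ldot t (u t) + g t)) w := rfl
      rw [e, ← Real.norm_eq_abs]
      calc ‖(E.PV.pullDual t (LD.Ldot t (u t) + g t)) w‖
          ≤ ‖E.PV.pullDual t (LD.Ldot t (u t) + g t)‖ * ‖w‖ :=
            ContinuousLinearMap.le_opNorm _ _
        _ ≤ ‖E.PV.pullDual t (LD.Ldot t (u t) + g t)‖ * Mη :=
            mul_le_mul_of_nonneg_left hw (norm_nonneg _)
        _ = Mη * ‖E.PV.pullDual t (LD.Ldot t (u t) + g t)‖ := mul_comm _ _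
    have h2 : |betaH E t (E.ι 0 (Lubar t)) (E.ι 0 wd)| ≤ K1 * ‖Lubar t‖ := by
      refine (abs_betaH_le E ht _ _).trans ?_
      have ha : ‖E.ι 0 (Lubar t)‖ ≤ ‖E.ι 0‖ * ‖Lubar t‖ := (E.ι 0).le_opNorm _
      have hb : ‖E.ι 0 wd‖ ≤ ‖E.ι 0‖ * Mη' :=
        ((E.ι 0).le_opNorm _).trans (mul_le_mul_of_nonneg_left hwd (norm_nonneg _))
      calc (E.PH.C * ‖E.ι 0 (Lubar t)‖) * (E.PH.C * ‖E.ι 0 wd‖)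
          ≤ (E.PH.C * (‖E.ι 0‖ * ‖Lubar t‖)) * (E.PH.C * (‖E.ι 0‖ * Mη')) := by
            apply mul_le_mul (mul_le_mul_of_nonneg_left ha E.PH.C_pos.le)
              (mul_le_mul_of_nonneg_left hb E.PH.C_pos.le)
              (mul_nonneg E.PH.C_pos.le (norm_nonneg _))
              (mul_nonneg E.PH.C_pos.le (by positivity))
        _ = K1 * ‖Lubar t‖ := by rw [hK1]; ring
    have h3 : |E.lamHat t (E.ι 0 (Lubar t)) (E.ι 0 w)| ≤ K2 * ‖Lubar t‖ := by
      refine (abs_lamHat_le E ht _ _).trans ?_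
      have ha : ‖E.ι 0 (Lubar t)‖ ≤ ‖E.ι 0‖ * ‖Lubar t‖ := (E.ι 0).le_opNorm _
      have hb : ‖E.ι 0 w‖ ≤ ‖E.ι 0‖ * Mη :=
        ((E.ι 0).le_opNorm _).trans (mul_le_mul_of_nonneg_left hw (norm_nonneg _))
      calc |E.Cθ| / 4 * (‖E.ι 0 (Lubar t)‖ * ‖E.ι 0 w‖)
          ≤ |E.Cθ| / 4 * ((‖E.ι 0‖ * ‖Lubar t‖) * (‖E.ι 0‖ * Mη)) := by
            refine mul_le_mul_of_nonneg_left ?_ (by positivity)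
            exact mul_le_mul ha hb (norm_nonneg _) (by positivity)
        _ = K2 * ‖Lubar t‖ := by rw [hK2]; ring
    calc |(LD.Ldot t (u t) + g t) (E.PV.φ t w)
        + (betaH E t (E.ι 0 (Lubar t)) (E.ι 0 wd)
          + E.lamHat t (E.ι 0 (Lubar t)) (E.ι 0 w))|
        ≤ |(LD.Ldot t (u t) + g t) (E.PV.φ t w)|
          + (|betaH E t (E.ι 0 (Lubar t)) (E.ι 0 wd)|
            + |E.lamHat t (E.ι 0 (Lubar t)) (E.ι 0 w)|) :=
          (abs_add_le _ _).trans (by gcongr; exact abs_add_le _ _)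
      _ ≤ bound t := by rw [hbound]; exact add_le_add h1 (add_le_add h2 h3)
  -- each approximant is integrable (hence a.e. strongly measurable)
  have hIntn : ∀ n, Integrable
      (fun t => ItgF E LD u g (fun t => P n (η₀ t)) (fun t => P n (deriv η₀ t)) t)
      (volume.restrict (Ioc (0:ℝ) T)) := by
    intro n
    refine integrable_ItgF E LD hT hu hGmem
      (((P n).continuous.comp hηcont).aestronglyMeasurable)
      (((P n).continuous.comp hηdcont).aestronglyMeasurable)
      (Mw := Mη) (Mwd := Mη') ?_ ?_
    · exact fun t => (hPnorm n (η₀ t)).trans (hMη t)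
    · exact fun t => (hPnorm n (deriv η₀ t)).trans (hMη' t)
  have hDCT := MeasureTheory.tendsto_integral_of_dominated_convergence
    (F := fun n => fun t => ItgF E LD u g (fun t => P n (η₀ t))
      (fun t => P n (deriv η₀ t)) t)
    (f := fun t => ItgF E LD u g η₀ (deriv η₀) t)
    bound (fun n => (hIntn n).aestronglyMeasurable) hboundint
    (by
      intro n
      filter_upwards [ae_mem_Icc' T] with t ht
      rw [Real.norm_eq_abs]
      exact habs t ht _ _ ((hPnorm n (η₀ t)).trans (hMη t))
        ((hPnorm n (deriv η₀ t)).trans (hMη' t)))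
    (by
      filter_upwards [ae_mem_Icc' T] with t ht
      have hc1 : Continuous (fun w : V 0 => (LD.Ldot t (u t) + g t) (E.PV.φ t w)) :=
        (LD.Ldot t (u t) + g t).continuous.comp (E.PV.φ t).continuous
      have hc2 : Continuous (fun wd : V 0 => betaH E t (E.ι 0 (Lubar t)) (E.ι 0 wd)) :=
        (continuous_betaH_pair E t).comp
          (Continuous.prodMk continuous_const ((E.ι 0).continuous))
      have hc3 : Continuous (fun w : V 0 => E.lamHat t (E.ι 0 (Lubar t)) (E.ι 0 w)) :=
        (continuous_lamHat_pair E ht).comp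
          (Continuous.prodMk continuous_const ((E.ι 0).continuous))
      have t1 := (hc1.tendsto (η₀ t)).comp (hPtend (η₀ t))
      have t2 := (hc2.tendsto (deriv η₀ t)).comp (hPtend (deriv η₀ t))
      have t3 := (hc3.tendsto (η₀ t)).comp (hPtend (η₀ t))
      exact t1.add (t2.add t3))
  have hzero : (∫ t in Ioc (0:ℝ) T, ItgF E LD u g η₀ (deriv η₀) t) = 0 := by
    refine tendsto_nhds_unique hDCT ?_
    simpa [Hn] using (tendsto_const_nhds :
      Filter.Tendsto (fun _ : ℕ => (0:ℝ)) Filter.atTop (𝓝 0))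
  -- split the combined identity into the IWMD equation
  have hηm : AEStronglyMeasurable η₀ (volume.restrict (Ioc (0:ℝ) T)) :=
    hηcont.aestronglyMeasurable
  have hηdm : AEStronglyMeasurable (deriv η₀) (volume.restrict (Ioc (0:ℝ) T)) :=
    hηdcont.aestronglyMeasurable
  have hiG := integrable_dual_eval E hGmem hηm hMη
  have hib := integrable_betaH E hLubar hηdm hMη'
  have hil := integrable_lamHat E hT hLubar hηm hMη
  have hsplit : (∫ t in Ioc (0:ℝ) T, ItgF E LD u g η₀ (deriv η₀) t)
      = (∫ t in Ioc (0:ℝ) T, (LD.Ldot t (u t) + g t) (E.PV.φ t (η₀ t)))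
        + ((∫ t in Ioc (0:ℝ) T,
            betaH E t (E.ι 0 (Lubar t)) (E.ι 0 (deriv η₀ t)))
          + ∫ t in Ioc (0:ℝ) T, E.lamHat t (E.ι 0 (Lubar t)) (E.ι 0 (η₀ t))) := by
    have hib23 : Integrable (fun t => betaH E t (E.ι 0 (Lubar t)) (E.ι 0 (deriv η₀ t))
        + E.lamHat t (E.ι 0 (Lubar t)) (E.ι 0 (η₀ t)))
        (volume.restrict (Ioc (0:ℝ) T)) := hib.add hil
    rw [show (fun t => ItgF E LD u g η₀ (deriv η₀) t)
        = fun t => (LD.Ldot t (u t) + g t) (E.PV.φ t (η₀ t))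
          + (betaH E t (E.ι 0 (Lubar t)) (E.ι 0 (deriv η₀ t))
            + E.lamHat t (E.ι 0 (Lubar t)) (E.ι 0 (η₀ t))) from rfl]
    rw [integral_add hiG hib23, integral_add hib hil]
  rw [hsplit] at hzero
  -- match the IWMD statement
  have eInner : (∫ t in Ioc (0:ℝ) T,
      (inner ℝ (E.ι t (LD.LV t (u t))) (E.ι t (E.PV.φ t (deriv η₀ t))) : ℝ))
      = ∫ t in Ioc (0:ℝ) T, betaH E t (E.ι 0 (Lubar t)) (E.ι 0 (deriv η₀ t)) := by
    refine integral_congr_ae (Eventually.of_forall fun t => ?_)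
    show (inner ℝ (E.ι t (LD.LV t (u t))) (E.ι t (E.PV.φ t (deriv η₀ t))) : ℝ) = _
    rw [hLuphi t, inner_iota_eq E t]
  have eLam : (∫ t in Ioc (0:ℝ) T,
      E.lam t (E.ι t (LD.LV t (u t))) (E.ι t (E.PV.φ t (η₀ t))))
      = ∫ t in Ioc (0:ℝ) T, E.lamHat t (E.ι 0 (Lubar t)) (E.ι 0 (η₀ t)) := by
    refine integral_congr_ae (Eventually.of_forall fun t => ?_)
    show E.lam t (E.ι t (LD.LV t (u t))) (E.ι t (E.PV.φ t (η₀ t))) = _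
    rw [hLuphi t, lam_iota_eq E t]
  rw [eInner, eLam]
  linarith [hzero]

end AuxAES13
section AuxAES14
open EvolvingGelfand

variable {T : ℝ} {V H : ℝ → Type*}
  [∀ t, NormedAddCommGroup (V t)] [∀ t, InnerProductSpace ℝ (V t)]
  [∀ t, NormedAddCommGroup (H t)] [∀ t, InnerProductSpace ℝ (H t)]

lemma memL2Xstar_sub (E : EvolvingGelfand T V H)
    {f1 f2 : ∀ t, StrongDual ℝ (V t)}
    (h1 : E.PV.MemL2Xstar f1) (h2 : E.PV.MemL2Xstar f2) :
    E.PV.MemL2Xstar (fun t => f1 t - f2 t) := by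
  rw [CompatiblePair.MemL2Xstar]
  have e : (fun t => E.PV.pullDual t (f1 t - f2 t))
      = fun t => E.PV.pullDual t (f1 t) - E.PV.pullDual t (f2 t) := by
    funext t
    exact ContinuousLinearMap.sub_comp _ _ _
  rw [e]
  exact h1.sub h2

lemma backward_full (E : EvolvingGelfand T V H) (LD : LData E) (hT : 0 < T)
    [CompleteSpace (V 0)] [TopologicalSpace.SeparableSpace (V 0)]
    {u : ∀ t, V t} (hu : E.PV.MemL2X u)
    {g : ∀ t, StrongDual ℝ (V t)} (hg : E.PV.MemL2Xstar g)
    (hR : ∀ v₀ : V 0, ∀ ζ : ℝ → ℝ, ContDiff ℝ (⊤ : ℕ∞) ζ → tsupport ζ ⊆ Ioo (0:ℝ) T →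
      (∫ t in Ioc (0:ℝ) T, deriv ζ t *
          (inner ℝ (E.ι t (LD.LV t (u t))) (E.ι t (E.PV.φ t v₀)) : ℝ))
        = -∫ t in Ioc (0:ℝ) T, ζ t *
            (g t (E.PV.φ t v₀)
              + (LD.Ldot t (u t) (E.PV.φ t v₀)
                + E.lam t (E.ι t (LD.LV t (u t))) (E.ι t (E.PV.φ t v₀))))) :
    ∃ g' : ∀ t, StrongDual ℝ (V t), E.PV.MemL2Xstar g' ∧ E.IWMD u g' ∧
      ∀ᵐ t ∂(volume.restrict (Ioc (0:ℝ) T)), LD.Lstar t (g' t) = g t := by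
  classical
  have hGmem : E.PV.MemL2Xstar (fun t => LD.Ldot t (u t) + g t) :=
    memL2Xstar_add E (memL2Xstar_Ldot_u E LD hT hu) hg
  have hIWLu := backward_iwmd E LD hT hu hg hGmem hR
  obtain ⟨g₂, hg₂mem, hg₂⟩ := (LD.hL6 u hu).mpr ⟨_, hGmem, hIWLu⟩
  have h7 := LD.hL7 u g₂ hu hg₂mem hg₂
  have hG2mem : E.PV.MemL2Xstar (fun t => LD.Ldot t (u t) + LD.Lstar t (g₂ t)) := h7.1
  have hIW2 := h7.2
  have hLsg₂mem : E.PV.MemL2Xstar (fun t => LD.Lstar t (g₂ t)) := by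
    have hsub := memL2Xstar_sub E hG2mem (memL2Xstar_Ldot_u E LD hT hu)
    have e : (fun t => LD.Ldot t (u t) + LD.Lstar t (g₂ t) - LD.Ldot t (u t))
        = fun t => LD.Lstar t (g₂ t) := funext fun t => by abel
    rw [e] at hsub
    exact hsub
  -- for each v₀ and ζ, test the two material-derivative identities against ζ • v₀
  have hz : ∀ v₀ : V 0, ∀ ζ : ℝ → ℝ, ContDiff ℝ (⊤ : ℕ∞) ζ → tsupport ζ ⊆ Ioo (0:ℝ) T →
      ∫ t in Ioc (0:ℝ) T,
        ζ t * (g t (E.PV.φ t v₀) - LD.Lstar t (g₂ t) (E.PV.φ t v₀)) = 0 := by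
    intro v₀ ζ hζ hζsupp
    set η₀ : ℝ → V 0 := fun t => ζ t • v₀ with hη₀def
    have hη : ContDiff ℝ (⊤ : ℕ∞) η₀ := hζ.smul contDiff_const
    have hηsupp : tsupport η₀ ⊆ Ioo (0:ℝ) T := by
      refine subset_trans (closure_mono ?_) hζsupp
      intro t ht
      simp only [Function.mem_support, hη₀def] at ht ⊢
      intro h0
      exact ht (by rw [h0, zero_smul])
    obtain ⟨Mζ, hMζ⟩ := hζ.continuous.bounded_above_of_compact_support
      (hasCompactSupport_of_tsupport_subset hζsupp)
    have hηbd : ∀ t, ‖η₀ t‖ ≤ Mζ * ‖v₀‖ := fun t => by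
      rw [hη₀def]
      simp only [norm_smul]
      exact mul_le_mul_of_nonneg_right (hMζ t) (norm_nonneg _)
    have hηm : AEStronglyMeasurable η₀ (volume.restrict (Ioc (0:ℝ) T)) :=
      hη.continuous.aestronglyMeasurable
    have e1 := hIWLu η₀ hη hηsupp
    have e2 := hIW2 η₀ hη hηsupp
    have heq : (∫ t in Ioc (0:ℝ) T, (LD.Ldot t (u t) + g t) (E.PV.φ t (η₀ t)))
        = ∫ t in Ioc (0:ℝ) T,
            (LD.Ldot t (u t) + LD.Lstar t (g₂ t)) (E.PV.φ t (η₀ t)) := by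
      rw [e1, e2]
    have hiG := integrable_dual_eval E hGmem hηm hηbd
    have hiG2 := integrable_dual_eval E hG2mem hηm hηbd
    have hval : (∫ t in Ioc (0:ℝ) T, (LD.Ldot t (u t) + g t) (E.PV.φ t (η₀ t)))
        - (∫ t in Ioc (0:ℝ) T,
            (LD.Ldot t (u t) + LD.Lstar t (g₂ t)) (E.PV.φ t (η₀ t))) = 0 := by
      rw [heq, sub_self]
    calc (∫ t in Ioc (0:ℝ) T,
        ζ t * (g t (E.PV.φ t v₀) - LD.Lstar t (g₂ t) (E.PV.φ t v₀)))
        = ∫ t in Ioc (0:ℝ) T,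
            ((LD.Ldot t (u t) + g t) (E.PV.φ t (η₀ t))
              - (LD.Ldot t (u t) + LD.Lstar t (g₂ t)) (E.PV.φ t (η₀ t))) := ?_
      _ = (∫ t in Ioc (0:ℝ) T, (LD.Ldot t (u t) + g t) (E.PV.φ t (η₀ t)))
          - (∫ t in Ioc (0:ℝ) T,
              (LD.Ldot t (u t) + LD.Lstar t (g₂ t)) (E.PV.φ t (η₀ t))) :=
          integral_sub hiG hiG2
      _ = 0 := hval
    refine integral_congr_ae (Eventually.of_forall fun t => ?_)
    show ζ t * (g t (E.PV.φ t v₀) - LD.Lstar t (g₂ t) (E.PV.φ t v₀))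
      = (LD.Ldot t (u t) + g t) (E.PV.φ t (ζ t • v₀))
        - (LD.Ldot t (u t) + LD.Lstar t (g₂ t)) (E.PV.φ t (ζ t • v₀))
    rw [(E.PV.φ t).map_smul, (LD.Ldot t (u t) + g t).map_smul,
      (LD.Ldot t (u t) + LD.Lstar t (g₂ t)).map_smul, smul_eq_mul, smul_eq_mul]
    show ζ t * (g t (E.PV.φ t v₀) - LD.Lstar t (g₂ t) (E.PV.φ t v₀))
      = ζ t * (LD.Ldot t (u t) (E.PV.φ t v₀) + g t (E.PV.φ t v₀))
        - ζ t * (LD.Ldot t (u t) (E.PV.φ t v₀) + LD.Lstar t (g₂ t) (E.PV.φ t v₀))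
    ring
  -- du Bois-Reymond on a dense sequence
  haveI : Nonempty (V 0) := ⟨0⟩
  obtain ⟨d, hd⟩ := TopologicalSpace.exists_dense_seq (V 0)
  have hint : ∀ k : ℕ, Integrable
      (fun t => g t (E.PV.φ t (d k)) - LD.Lstar t (g₂ t) (E.PV.φ t (d k)))
      (volume.restrict (Ioc (0:ℝ) T)) := by
    intro k
    exact (integrable_dual_eval E hg (aestronglyMeasurable_const (b := d k))
        (fun _ => le_refl ‖d k‖)).sub
      (integrable_dual_eval E hLsg₂mem (aestronglyMeasurable_const (b := d k))
        (fun _ => le_refl ‖d k‖))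
  have hae : ∀ᵐ t ∂(volume.restrict (Ioc (0:ℝ) T)), ∀ k : ℕ,
      g t (E.PV.φ t (d k)) - LD.Lstar t (g₂ t) (E.PV.φ t (d k)) = 0 := by
    rw [MeasureTheory.ae_all_iff]
    intro k
    exact duBoisReymond_aes hT (hint k) (fun ζ hζ hζsupp => hz (d k) ζ hζ hζsupp)
  refine ⟨g₂, hg₂mem, hg₂, ?_⟩
  filter_upwards [hae] with t htk
  have hcont : Continuous
      (fun v₀ : V 0 => g t (E.PV.φ t v₀) - LD.Lstar t (g₂ t) (E.PV.φ t v₀)) :=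
    ((g t).continuous.comp (E.PV.φ t).continuous).sub
      ((LD.Lstar t (g₂ t)).continuous.comp (E.PV.φ t).continuous)
  have hzero : (fun v₀ : V 0 => g t (E.PV.φ t v₀) - LD.Lstar t (g₂ t) (E.PV.φ t v₀))
      = fun _ => (0:ℝ) := by
    refine Continuous.ext_on hd hcont continuous_const ?_
    rintro x ⟨k, rfl⟩
    exact htk k
  ext v
  have := congrFun hzero ((E.PV.φ t).symm v)
  simp only [(E.PV.φ t).apply_symm_apply] at this
  linarith [this]

end AuxAES14
theorem stmt16 (T : ℝ) (hT : 0 < T) (V H : ℝ → Type*)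
    [∀ t, NormedAddCommGroup (V t)] [∀ t, InnerProductSpace ℝ (V t)]
    [∀ t, NormedAddCommGroup (H t)] [∀ t, InnerProductSpace ℝ (H t)]
    [∀ t, CompleteSpace (V t)] [∀ t, TopologicalSpace.SeparableSpace (V t)]
    [∀ t, CompleteSpace (H t)] [∀ t, TopologicalSpace.SeparableSpace (H t)]
    (E : EvolvingGelfand T V H)
    (hESE : E.ESE)
    (LD : LData E)
    (u : ∀ t, V t) (hu : E.PV.MemL2X u)
    (g : ∀ t, StrongDual ℝ (V t)) (hg : E.PV.MemL2Xstar g) :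
    -- `∂•u` exists in `L²_{V*}` with `L(t)∂•u(t) = g(t)` a.e.
    (∃ g' : ∀ t, StrongDual ℝ (V t), E.PV.MemL2Xstar g' ∧ E.IWMD u g' ∧
        ∀ᵐ t ∂(volume.restrict (Ioc (0:ℝ) T)), LD.Lstar t (g' t) = g t)
    ↔
    -- iff for every `v₀ ∈ V₀`,
    -- `(d/dt)(L(t)u(t), φ_t v₀)_{H(t)} = ⟨g(t) + M(t)u(t), φ_t v₀⟩` weakly in `(0,T)`,
    -- where `⟨M(t)v, w⟩ = ⟨L̇(t)v, w⟩ + λ(t; L(t)v, w)`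
    (∀ v₀ : V 0, ∀ ζ : ℝ → ℝ, ContDiff ℝ (⊤ : ℕ∞) ζ → tsupport ζ ⊆ Ioo (0:ℝ) T →
      (∫ t in Ioc (0:ℝ) T, deriv ζ t *
          (inner ℝ (E.ι t (LD.LV t (u t))) (E.ι t (E.PV.φ t v₀)) : ℝ))
        = -∫ t in Ioc (0:ℝ) T, ζ t *
            (g t (E.PV.φ t v₀)
              + (LD.Ldot t (u t) (E.PV.φ t v₀)
                + E.lam t (E.ι t (LD.LV t (u t))) (E.ι t (E.PV.φ t v₀))))) := by
  constructor
  · rintro ⟨g', hg'mem, hIW, hae⟩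
    exact forward_identity E LD hT hu hg'mem hIW hae
  · intro hR
    exact backward_full E LD hT hu hg hR
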